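/- arXiv:1707.04160 — 4 statements merged into one kernel-verified Lean document; each statement's English description precedes it below -/
import Mathlib

section
/- For a sequence X : ℕ → Bool, the following are equivalent: (1) there exists a deterministic Muller automaton M over Bool (on some finite state type) with μ(L(M)) = 0 and X ∈ L(M); (2) X is not disjunctive. -/
open MeasureTheory Filter

/-- The fair-coin product probability measure on Cantor space `ℕ → Bool`,
constructed as the pushforward of Lebesgue measure on `[0,1)` under binary expansion. -/
noncomputable def mu : Measure (ℕ → Bool) :=
  Measure.map (fun x n => decide (⌊x * 2 ^ (n + 1)⌋ % 2 = 1))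
    (volume.restrict (Set.Ico (0 : ℝ) 1))

/-- Action of a word on a state of an automaton. -/
def act {S A : Type*} (f : S → A → S) (s : S) (w : List A) : S := w.foldl f s

/-- The run of a sequence `X` on the machine `(S, f, s₀)`. -/
def run {S : Type*} (f : S → Bool → S) (s₀ : S) (X : ℕ → Bool) : ℕ → S
  | 0 => s₀
  | n + 1 => f (run f s₀ X n) (X n)

/-- `t` is reachable from `s`. -/
def Reach {S : Type*} (f : S → Bool → S) (s t : S) : Prop := ∃ w : List Bool, act f s w = t

/-- The connected component of a state `s`. -/
def component {S : Type*} (f : S → Bool → S) (s : S) : Set S :=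
  {t | Reach f s t ∧ Reach f t s}

/-- `g` is a leaf connected component. -/
def IsLeafComponent {S : Type*} (f : S → Bool → S) (g : Set S) : Prop :=
  (∃ s, g = component f s) ∧ ∀ s ∈ g, ∀ t, Reach f s t → Reach f t s

/-- The word `w` occurs as a subword of the sequence `X`. -/
def Occurs (w : List Bool) (X : ℕ → Bool) : Prop :=
  ∃ n, ∀ k < w.length, X (n + k) = w.getD k false

/-- `X` is disjunctive: every word occurs in `X` as a subword. -/
def Disjunctive (X : ℕ → Bool) : Prop := ∀ w : List Bool, Occurs w X

/-- The word `w` is a prefix of the sequence `X`. -/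
def IsPrefixOfSeq (w : List Bool) (X : ℕ → Bool) : Prop :=
  ∀ k < w.length, X k = w.getD k false

/-- `[L]`: the set of sequences having some prefix in the language `L`. -/
def cyl (L : Set (List Bool)) : Set (ℕ → Bool) := {X | ∃ w ∈ L, IsPrefixOfSeq w X}

/-- `I(X)`: the set of states visited infinitely often by the run of `X`. -/
def InfOcc {S : Type*} (f : S → Bool → S) (s₀ : S) (X : ℕ → Bool) : Set S :=
  {s | ∃ᶠ n in atTop, run f s₀ X n = s}

/-- `X` is accepted by the deterministic Büchi automaton `(S, f, s₀, F)`. -/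
def BuchiAccepts {S : Type*} (f : S → Bool → S) (s₀ : S) (F : Set S) (X : ℕ → Bool) : Prop :=
  ∃ᶠ n in atTop, run f s₀ X n ∈ F

/-- A language is regular if it is accepted by a DFA with finitely many states. -/
def Regular {A : Type} (L : Set (List A)) : Prop :=
  ∃ (S : Type) (_ : Fintype S) (f : S → A → S) (s₀ : S) (F : Set S),
    L = {w | act f s₀ w ∈ F}

/-- The convolution of two words. -/
def conv (x i : List Bool) : List (Option Bool × Option Bool) :=
  (List.range (max x.length i.length)).map (fun k => (x[k]?, i[k]?))

/-- `(I, U)` is an automatic family. -/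
def IsAutomaticFamily (I : Set (List Bool)) (U : List Bool → Set (List Bool)) : Prop :=
  Regular I ∧ Regular {c | ∃ i ∈ I, ∃ x ∈ U i, c = conv x i}

/-- `(I, U)` is an automatic randomness test (ART). -/
def IsART (I : Set (List Bool)) (U : List Bool → Set (List Bool)) : Prop :=
  IsAutomaticFamily I U ∧ ∀ ε : ENNReal, 0 < ε → ∃ i ∈ I, mu (cyl (U i)) ≤ ε

/-- `(I, U)` is a Martin-Löf automatic randomness test (MART). -/
def IsMART (I : Set (List Bool)) (U : List Bool → Set (List Bool)) : Prop :=
  IsAutomaticFamily I U ∧ I.Infinite ∧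
    ∀ i ∈ I, mu (cyl (U i)) ≤ (2 : ENNReal) ^ (-(i.length : ℤ))

/-- The covering region `F(I, U)` of a test. -/
def coverRegion (I : Set (List Bool)) (U : List Bool → Set (List Bool)) : Set (ℕ → Bool) :=
  ⋂ i ∈ I, cyl (U i)

namespace S9
noncomputable def gmap : ℝ → ℕ → Bool := fun x n => decide (⌊x * 2 ^ (n + 1)⌋ % 2 = 1)

lemma measurable_gmap : Measurable gmap := by
  apply measurable_pi_lambda
  intro n
  have h1 : Measurable fun x : ℝ => ⌊x * 2 ^ (n+1)⌋ :=
    Int.measurable_floor.comp (measurable_id.mul_const _)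
  exact Measurable.comp (f := fun x : ℝ => ⌊x * 2 ^ (n+1)⌋)
    (g := fun m : ℤ => decide (m % 2 = 1)) (measurable_from_top) h1

def cylF (n : ℕ) (σ : Fin n → Bool) : Set (ℕ → Bool) := {Y | ∀ j : Fin n, Y j = σ j}

lemma measurableSet_cylF (n : ℕ) (σ : Fin n → Bool) : MeasurableSet (cylF n σ) := by
  have : cylF n σ = ⋂ j : Fin n, (fun Y : ℕ → Bool => Y j) ⁻¹' {σ j} := by
    ext Y; simp [cylF]
  rw [this]
  exact MeasurableSet.iInter fun j => (measurable_pi_apply _) (measurableSet_singleton _)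

lemma floor_half (y : ℝ) : ⌊y / 2⌋ = ⌊y⌋ / 2 := by
  have h0 := Int.floor_le y
  have h1 := Int.lt_floor_add_one y
  rw [Int.floor_eq_iff]
  constructor
  · have h : ((⌊y⌋ / 2 : ℤ) : ℝ) * 2 ≤ (⌊y⌋ : ℝ) := by
      have : (⌊y⌋ / 2) * 2 ≤ ⌊y⌋ := by omega
      exact_mod_cast this
    linarith
  · have h : (⌊y⌋ : ℝ) + 1 ≤ (((⌊y⌋ / 2 : ℤ) : ℝ) + 1) * 2 := by
      have : ⌊y⌋ + 1 ≤ (⌊y⌋ / 2 + 1) * 2 := by omega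
      exact_mod_cast this
    linarith

lemma floor_pow_eq (n : ℕ) (σ : Fin n → Bool) :
    ∃ k : ℤ, ∀ x ∈ Set.Ico (0:ℝ) 1, (∀ j : Fin n, gmap x j = σ j) → ⌊x * 2 ^ n⌋ = k := by
  induction n with
  | zero =>
    refine ⟨0, fun x hx _ => ?_⟩
    rw [pow_zero, mul_one]
    exact Int.floor_eq_zero_iff.mpr (by simpa using hx)
  | succ n ih =>
    obtain ⟨k, hk⟩ := ih (fun j => σ j.castSucc)
    refine ⟨2*k + (if σ (Fin.last n) then 1 else 0), fun x hx hσ => ?_⟩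
    have hfl : ⌊x * 2 ^ n⌋ = k := by
      refine hk x hx (fun j => ?_)
      have := hσ j.castSucc
      simpa using this
    have heq : x * 2 ^ n = (x * 2 ^ (n+1)) / 2 := by ring
    have hdiv : ⌊x * 2 ^ (n+1)⌋ / 2 = k := by rw [← hfl, heq, floor_half]
    have hmod : ⌊x * 2 ^ (n+1)⌋ % 2 = (if σ (Fin.last n) then 1 else 0) := by
      have h := hσ (Fin.last n)
      have hlast : (Fin.last n : ℕ) = n := rfl
      simp only [gmap, hlast] at h
      rcases Int.emod_two_eq_zero_or_one (⌊x * 2 ^ (n+1)⌋) with h2 | h2 <;>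
        simp [h2] at h ⊢ <;> simp [h]
    omega
end S9

namespace S9
lemma mu_eq : mu = Measure.map gmap (volume.restrict (Set.Ico (0:ℝ) 1)) := rfl

lemma mu_apply (E : Set (ℕ → Bool)) (hE : MeasurableSet E) :
    mu E = volume (gmap ⁻¹' E ∩ Set.Ico (0:ℝ) 1) := by
  rw [mu_eq, Measure.map_apply measurable_gmap hE, Measure.restrict_apply' measurableSet_Ico]

lemma mu_univ : mu Set.univ = 1 := by
  rw [mu_apply _ MeasurableSet.univ]
  simp [Real.volume_Ico]

lemma mu_cylF_le (n : ℕ) (σ : Fin n → Bool) : mu (cylF n σ) ≤ (2:ENNReal)⁻¹ ^ n := by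
  rw [mu_apply _ (measurableSet_cylF n σ)]
  obtain ⟨k, hk⟩ := floor_pow_eq n σ
  have h2 : (0:ℝ) < 2 ^ n := by positivity
  have hsub : gmap ⁻¹' cylF n σ ∩ Set.Ico 0 1 ⊆ Set.Ico ((k:ℝ)/2^n) ((k+1)/2^n) := by
    rintro x ⟨hg, hx⟩
    have hfl := hk x hx hg
    constructor
    · rw [div_le_iff₀ h2]
      calc (k:ℝ) = ((⌊x * 2^n⌋ : ℤ) : ℝ) := by rw [hfl]
        _ ≤ x * 2^n := Int.floor_le _
    · rw [lt_div_iff₀ h2]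
      calc x * 2^n < ⌊x * 2^n⌋ + 1 := Int.lt_floor_add_one _
        _ = (k:ℝ) + 1 := by rw [hfl]
  calc volume (gmap ⁻¹' cylF n σ ∩ Set.Ico 0 1)
      ≤ volume (Set.Ico ((k:ℝ)/2^n) ((k+1)/2^n)) := measure_mono hsub
    _ = ENNReal.ofReal ((k+1)/2^n - k/2^n) := Real.volume_Ico
    _ = ENNReal.ofReal ((2:ℝ)⁻¹ ^ n) := by congr 1; rw [inv_pow]; field_simp; ring
    _ = (2:ENNReal)⁻¹ ^ n := by
        rw [ENNReal.ofReal_pow (by norm_num)]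
        congr 1
        rw [ENNReal.ofReal_inv_of_pos (by norm_num)]
        norm_num

lemma mu_cylF (n : ℕ) (σ : Fin n → Bool) : mu (cylF n σ) = (2:ENNReal)⁻¹ ^ n := by
  by_contra hne
  have hlt : mu (cylF n σ) < (2:ENNReal)⁻¹ ^ n := (mu_cylF_le n σ).lt_of_ne hne
  have hcover : (Set.univ : Set (ℕ → Bool)) ⊆ ⋃ τ : Fin n → Bool, cylF n τ :=
    fun Y _ => Set.mem_iUnion.mpr ⟨fun j => Y j, fun j => rfl⟩
  set R : ENNReal := ((2^n - 1 : ℕ) : ENNReal) * (2:ENNReal)⁻¹ ^ n with hRdef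
  have h1 : (1:ENNReal) ≤ mu (cylF n σ) + ∑ τ ∈ Finset.univ.erase σ, mu (cylF n τ) := by
    calc (1:ENNReal) = mu Set.univ := mu_univ.symm
      _ ≤ mu (⋃ τ : Fin n → Bool, cylF n τ) := measure_mono hcover
      _ ≤ ∑' τ : Fin n → Bool, mu (cylF n τ) := measure_iUnion_le _
      _ = ∑ τ : Fin n → Bool, mu (cylF n τ) := tsum_fintype _
      _ = mu (cylF n σ) + ∑ τ ∈ Finset.univ.erase σ, mu (cylF n τ) :=
          (Finset.add_sum_erase _ _ (Finset.mem_univ σ)).symm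
  have hR : ∑ τ ∈ Finset.univ.erase σ, mu (cylF n τ) ≤ R := by
    calc ∑ τ ∈ Finset.univ.erase σ, mu (cylF n τ)
        ≤ ∑ _τ ∈ Finset.univ.erase σ, (2:ENNReal)⁻¹ ^ n :=
          Finset.sum_le_sum fun τ _ => mu_cylF_le n τ
      _ = ((Finset.univ.erase σ).card : ENNReal) * (2:ENNReal)⁻¹ ^ n := by
          rw [Finset.sum_const, nsmul_eq_mul]
      _ = R := by
          rw [hRdef, Finset.card_erase_of_mem (Finset.mem_univ σ), Finset.card_univ]
          norm_num
  have hfin : R ≠ ⊤ :=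
    ENNReal.mul_ne_top (ENNReal.natCast_ne_top _)
      (ENNReal.pow_ne_top (by norm_num))
  have hkey : (1:ENNReal) < 1 := by
    calc (1:ENNReal) ≤ mu (cylF n σ) + ∑ τ ∈ Finset.univ.erase σ, mu (cylF n τ) := h1
      _ ≤ mu (cylF n σ) + R := add_le_add le_rfl hR
      _ < (2:ENNReal)⁻¹ ^ n + R := ENNReal.add_lt_add_right hfin hlt
      _ = 1 := by
          rw [hRdef]
          nth_rewrite 1 [← one_mul ((2:ENNReal)⁻¹ ^ n)]
          rw [← add_mul]
          have hnat : (1:ENNReal) + ((2^n - 1 : ℕ) : ENNReal) = ((2^n : ℕ) : ENNReal) := by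
            have h2 : 1 + (2^n - 1) = 2^n := by
              have := Nat.one_le_two_pow (n := n); omega
            exact_mod_cast h2
          rw [hnat]
          push_cast
          rw [← mul_pow]
          norm_num [ENNReal.mul_inv_cancel]
  exact absurd hkey (lt_irrefl _)

lemma mu_le_card {E : Set (ℕ → Bool)} {n : ℕ} (T : Finset (Fin n → Bool))
    (h : E ⊆ ⋃ σ ∈ T, cylF n σ) : mu E ≤ T.card * (2:ENNReal)⁻¹ ^ n := by
  calc mu E ≤ mu (⋃ σ ∈ T, cylF n σ) := measure_mono h
    _ ≤ ∑ σ ∈ T, mu (cylF n σ) := measure_biUnion_finset_le T _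
    _ ≤ ∑ σ ∈ T, (2:ENNReal)⁻¹ ^ n := Finset.sum_le_sum fun σ _ => mu_cylF_le n σ
    _ = T.card * (2:ENNReal)⁻¹ ^ n := by rw [Finset.sum_const, nsmul_eq_mul]

lemma mu_null_of_le {E : Set (ℕ → Bool)} (c : ℕ → ENNReal) (h : ∀ j, mu E ≤ c j)
    (hc : Tendsto c atTop (nhds 0)) : mu E = 0 :=
  le_antisymm (ge_of_tendsto' hc h) zero_le
end S9

namespace S9
section Auto
variable {S : Type*} (f : S → Bool → S) (s₀ : S) (X : ℕ → Bool)

def seg (X : ℕ → Bool) (n k : ℕ) : List Bool := (List.range k).map fun i => X (n + i)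

lemma seg_length (n k : ℕ) : (seg X n k).length = k := by simp [seg]

lemma seg_getElem (n k : ℕ) (i : ℕ) (hi : i < (seg X n k).length) :
    (seg X n k)[i] = X (n + i) := by
  simp [seg]

lemma act_append (s : S) (u v : List Bool) : act f s (u ++ v) = act f (act f s u) v :=
  List.foldl_append

lemma seg_succ (n k : ℕ) : seg X n (k+1) = seg X n k ++ [X (n+k)] := by
  simp [seg, List.range_succ]

lemma run_add (n k : ℕ) : run f s₀ X (n + k) = act f (run f s₀ X n) (seg X n k) := by
  induction k with
  | zero => rfl
  | succ k ih =>
    rw [← Nat.add_assoc, show n + k + 1 = (n + k) + 1 from rfl]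
    show f (run f s₀ X (n + k)) (X (n + k)) = _
    rw [ih, seg_succ, act_append]
    rfl

lemma run_congr {Y : ℕ → Bool} (n : ℕ) (h : ∀ k < n, X k = Y k) :
    run f s₀ X n = run f s₀ Y n := by
  induction n with
  | zero => rfl
  | succ n ih =>
    show f (run f s₀ X n) (X n) = f (run f s₀ Y n) (Y n)
    rw [ih (fun k hk => h k (Nat.lt_succ_of_lt hk)), h n (Nat.lt_succ_self n)]

lemma infOcc_nonempty [Finite S] : (InfOcc f s₀ X).Nonempty := by
  by_contra h
  rw [Set.not_nonempty_iff_eq_empty] at h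
  have hfin : ∀ s : S, {n : ℕ | run f s₀ X n = s}.Finite := by
    intro s
    have hs : s ∉ InfOcc f s₀ X := by rw [h]; exact Set.notMem_empty s
    rw [InfOcc, Set.mem_setOf_eq, Nat.frequently_atTop_iff_infinite] at hs
    exact Set.not_infinite.mp hs
  have : (Set.univ : Set ℕ).Finite := by
    have hcov : (Set.univ : Set ℕ) ⊆ ⋃ s ∈ (Set.univ : Set S), {n : ℕ | run f s₀ X n = s} := by
      intro n _; exact Set.mem_biUnion (Set.mem_univ _) rfl
    exact ((Set.finite_univ).biUnion (fun s _ => hfin s)).subset hcov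
  exact Set.infinite_univ this

lemma eventually_mem_infOcc [Finite S] :
    ∃ N : ℕ, ∀ n ≥ N, run f s₀ X n ∈ InfOcc f s₀ X := by
  have h1 : ∀ s ∈ (InfOcc f s₀ X)ᶜ, ∀ᶠ n in Filter.atTop, run f s₀ X n ≠ s := by
    intro s hs
    exact Filter.not_frequently.mp hs
  have h2 : ∀ᶠ n in Filter.atTop, ∀ s ∈ (InfOcc f s₀ X)ᶜ, run f s₀ X n ≠ s :=
    (eventually_all_finite (Set.toFinite _)).mpr h1
  obtain ⟨N, hN⟩ := Filter.eventually_atTop.mp h2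
  exact ⟨N, fun n hn => by_contra fun hc => hN n hn _ hc rfl⟩

lemma reach_of_infOcc {s t : S} (hs : s ∈ InfOcc f s₀ X) (ht : t ∈ InfOcc f s₀ X) :
    Reach f s t := by
  obtain ⟨n₁, -, h₁⟩ := Filter.frequently_atTop.mp hs 0
  obtain ⟨n₂, hn₂, h₂⟩ := Filter.frequently_atTop.mp ht n₁
  refine ⟨seg X n₁ (n₂ - n₁), ?_⟩
  rw [← h₁, ← run_add, Nat.add_sub_cancel' hn₂, h₂]

lemma occurs_from (hX : Disjunctive X) (w : List Bool) (N : ℕ) :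
    ∃ n ≥ N, ∀ k < w.length, X (n + k) = w.getD k false := by
  obtain ⟨n, hn⟩ := hX (List.replicate N false ++ w)
  refine ⟨n + N, Nat.le_add_left N n, fun k hk => ?_⟩
  have hlen : N + k < (List.replicate N false ++ w).length := by
    simp [List.length_append, List.length_replicate]; omega
  have := hn (N + k) hlen
  rw [show n + N + k = n + (N + k) from by omega, this,
    List.getD_eq_getElem?_getD, List.getD_eq_getElem?_getD,
    List.getElem?_append_right (by simp [List.length_replicate])]
  simp [List.length_replicate]

/-- escape property: starting from `u`, reading some prefix of `z` leaves `C`. -/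
def Escape (C : Set S) (u : S) (z : List Bool) : Prop :=
  ∃ j ≤ z.length, act f u (z.take j) ∉ C

lemma escape_append_left {C : Set S} {u : S} {z₁ : List Bool} (z₂ : List Bool)
    (h : Escape f C u z₁) : Escape f C u (z₁ ++ z₂) := by
  obtain ⟨j, hj, hm⟩ := h
  exact ⟨j, by simp; omega, by rwa [List.take_append_of_le_length hj]⟩

lemma escape_append_right {C : Set S} {u : S} {z₂ : List Bool} (z₁ : List Bool)
    (h : Escape f C (act f u z₁) z₂) : Escape f C u (z₁ ++ z₂) := by
  obtain ⟨j, hj, hm⟩ := h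
  refine ⟨z₁.length + j, by simp; omega, ?_⟩
  rw [List.take_append, act_append, List.take_of_length_le (by omega), Nat.add_sub_cancel_left]
  exact hm

lemma exists_escape_word [Finite S] (C : Set S)
    (hesc : ∀ u ∈ C, ∃ w : List Bool, act f u w ∉ C) :
    ∀ (W : Finset S), ↑W ⊆ C → ∃ z : List Bool, ∀ u ∈ W, Escape f C u z := by
  classical
  suffices H : ∀ (n : ℕ) (W : Finset S), W.card ≤ n → ↑W ⊆ C →
      ∃ z : List Bool, ∀ u ∈ W, Escape f C u z by
    intro W hW; exact H W.card W le_rfl hW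
  intro n
  induction n with
  | zero =>
    intro W hcard _
    have : W = ∅ := Finset.card_eq_zero.mp (Nat.le_zero.mp hcard)
    exact ⟨[], by simp [this]⟩
  | succ n ih =>
    intro W hcard hWC
    rcases W.eq_empty_or_nonempty with rfl | ⟨v, hv⟩
    · exact ⟨[], by simp⟩
    obtain ⟨z₀, hz₀⟩ := hesc v (hWC hv)
    set W' : Finset S := (W.image (fun u => act f u z₀)).filter (· ∈ C) with hW'def
    have hW'C : ↑W' ⊆ C := by
      intro u hu
      exact (Finset.mem_filter.mp hu).2
    have hcard' : W'.card ≤ n := by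
      have hsub : W' ⊆ (W.image (fun u => act f u z₀)).erase (act f v z₀) := by
        intro u hu
        rw [Finset.mem_erase]
        refine ⟨?_, (Finset.mem_filter.mp hu).1⟩
        rintro rfl
        exact hz₀ ((Finset.mem_filter.mp hu).2)
      calc W'.card ≤ ((W.image (fun u => act f u z₀)).erase (act f v z₀)).card :=
            Finset.card_le_card hsub
        _ ≤ (W.image (fun u => act f u z₀)).card - 1 :=
            le_of_eq (Finset.card_erase_of_mem (Finset.mem_image_of_mem _ hv))
        _ ≤ W.card - 1 := by
            have := Finset.card_image_le (s := W) (f := fun u => act f u z₀)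
            omega
        _ ≤ n := by omega
    obtain ⟨z₁, hz₁⟩ := ih W' hcard' hW'C
    refine ⟨z₀ ++ z₁, fun u hu => ?_⟩
    by_cases hc : act f u z₀ ∈ C
    · refine escape_append_right f z₀ (hz₁ _ ?_)
      rw [hW'def, Finset.mem_filter]
      exact ⟨Finset.mem_image_of_mem _ hu, hc⟩
    · exact escape_append_left f z₁ ⟨z₀.length, le_rfl, by rwa [List.take_length]⟩

theorem infOcc_closed [Finite S] (hX : Disjunctive X) :
    ∀ s ∈ InfOcc f s₀ X, ∀ b : Bool, f s b ∈ InfOcc f s₀ X := by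
  classical
  by_contra hcon
  push_neg at hcon
  obtain ⟨sstar, hsstar, b, htb⟩ := hcon
  set C := InfOcc f s₀ X with hC
  have hesc : ∀ u ∈ C, ∃ w : List Bool, act f u w ∉ C := by
    intro u hu
    obtain ⟨y, hy⟩ := reach_of_infOcc f s₀ X hu hsstar
    refine ⟨y ++ [b], ?_⟩
    rw [act_append, hy]
    exact htb
  obtain ⟨z, hz⟩ := exists_escape_word f C hesc (Set.toFinite C).toFinset
    (by simp [Set.Finite.coe_toFinset])
  obtain ⟨N₀, hN₀⟩ := eventually_mem_infOcc f s₀ X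
  obtain ⟨n, hn, hocc⟩ := occurs_from X hX z N₀
  have hu : run f s₀ X n ∈ C := hN₀ n hn
  obtain ⟨j, hj, hesc'⟩ := hz (run f s₀ X n) ((Set.toFinite C).mem_toFinset.mpr hu)
  apply hesc'
  have hseg : seg X n j = z.take j := by
    apply List.ext_getElem
    · rw [seg_length, List.length_take]; omega
    · intro i h1 h2
      rw [seg_getElem, List.getElem_take]
      have hiz : i < z.length := by rw [List.length_take] at h2; omega
      rw [← List.getD_eq_getElem z false hiz]
      exact hocc i hiz
  rw [← hseg, ← run_add]
  exact hN₀ (n + j) (le_trans hn (Nat.le_add_right n j))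
end Auto
end S9

namespace S9

lemma mod_succ_lt {n m : ℕ} (h : n % m + 1 < m) : (n + 1) % m = n % m + 1 := by
  have hq : m * (n / m) + n % m = n := Nat.div_add_mod n m
  have h1 : n + 1 = m * (n / m) + (n % m + 1) := by omega
  rw [h1, Nat.mul_add_mod, Nat.mod_eq_of_lt h]

lemma mod_succ_eq {n m : ℕ} (h : n % m + 1 = m) : (n + 1) % m = 0 := by
  have hq : m * (n / m) + n % m = n := Nat.div_add_mod n m
  have h1 : n + 1 = m * (n / m) + (n % m + 1) := by omega
  rw [h1, Nat.mul_add_mod, h, Nat.mod_self]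

/-- Transition function of the block-matching machine for the word `w`. -/
def mf (w : List Bool) (s : Option (Fin w.length × Bool)) (bb : Bool) :
    Option (Fin w.length × Bool) :=
  match s with
  | none => none
  | some (i, t) =>
    if h : (i : ℕ) + 1 < w.length then
      if t = true ∧ bb = w.getD i false then some (⟨(i : ℕ) + 1, h⟩, true)
      else some (⟨(i : ℕ) + 1, h⟩, false)
    else
      if t = true ∧ bb = w.getD i false then none
      else some (⟨0, i.pos⟩, true)

lemma machine_run (w : List Bool) (hm : 0 < w.length) (Y : ℕ → Bool) (n : ℕ) :
    (run (mf w) (some (⟨0, hm⟩, true)) Y n = none ∧ Occurs w Y) ∨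
    run (mf w) (some (⟨0, hm⟩, true)) Y n =
      some (⟨n % w.length, Nat.mod_lt n hm⟩,
        decide (∀ k < n % w.length, Y (n - n % w.length + k) = w.getD k false)) := by
  induction n with
  | zero =>
    right
    have h0 : (0 : ℕ) % w.length = 0 := Nat.zero_mod _
    simp [run, h0]
  | succ n ih =>
    have hstep : run (mf w) (some (⟨0, hm⟩, true)) Y (n + 1) =
        mf w (run (mf w) (some (⟨0, hm⟩, true)) Y n) (Y n) := rfl
    rcases ih with ⟨hnone, hocc⟩ | hsome
    · left
      refine ⟨?_, hocc⟩
      rw [hstep, hnone]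
      rfl
    · have hilt : n % w.length < w.length := Nat.mod_lt n hm
      have hin : n % w.length ≤ n := Nat.mod_le n _
      rw [hstep, hsome]
      simp only [mf]
      split_ifs with h1 h2 h2
      · -- still inside block, matched
        right
        have hmod : (n + 1) % w.length = n % w.length + 1 := mod_succ_lt (by simpa using h1)
        have harith : n + 1 - (n % w.length + 1) = n - n % w.length := by omega
        obtain ⟨hD, hY⟩ := h2
        have hDp := of_decide_eq_true hD
        simp only [hmod, harith, Option.some.injEq, Prod.mk.injEq, Fin.mk.injEq]
        refine ⟨trivial, ?_⟩
        symm
        rw [decide_eq_true_eq]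
        intro k hk
        rcases Nat.lt_succ_iff_lt_or_eq.mp hk with hk' | rfl
        · exact hDp k hk'
        · rw [Nat.sub_add_cancel hin]
          simpa using hY
      · -- still inside block, mismatch
        right
        have hmod : (n + 1) % w.length = n % w.length + 1 := mod_succ_lt (by simpa using h1)
        have harith : n + 1 - (n % w.length + 1) = n - n % w.length := by omega
        simp only [hmod, harith, Option.some.injEq, Prod.mk.injEq, Fin.mk.injEq]
        refine ⟨trivial, ?_⟩
        symm
        rw [decide_eq_false_iff_not]
        intro hP
        apply h2
        constructor
        · exact decide_eq_true (fun k hk => hP k (by omega))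
        · have := hP (n % w.length) (by omega)
          rw [Nat.sub_add_cancel hin] at this
          simpa using this
      · -- end of block, matched: occurrence found
        left
        obtain ⟨hD, hY⟩ := h2
        have hDp := of_decide_eq_true hD
        refine ⟨rfl, n - n % w.length, fun k hk => ?_⟩
        have him : n % w.length + 1 = w.length := by simp at h1; omega
        have hk2 : k < n % w.length + 1 := by omega
        rcases Nat.lt_succ_iff_lt_or_eq.mp hk2 with hk' | rfl
        · exact hDp k hk'
        · rw [Nat.sub_add_cancel hin]
          simpa using hY
      · -- end of block, mismatch: restart
        right
        have him : n % w.length + 1 = w.length := by simp at h1; omega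
        have hmod : (n + 1) % w.length = 0 := mod_succ_eq him
        simp [hmod]

lemma machine_absorb (w : List Bool) (hm : 0 < w.length) (Y : ℕ → Bool) (n k : ℕ)
    (h : run (mf w) (some (⟨0, hm⟩, true)) Y n = none) :
    run (mf w) (some (⟨0, hm⟩, true)) Y (n + k) = none := by
  induction k with
  | zero => exact h
  | succ k ih =>
    show mf w (run (mf w) (some (⟨0, hm⟩, true)) Y (n + k)) (Y (n + k)) = none
    rw [ih]
    rfl

lemma machine_accepts (X : ℕ → Bool) (w : List Bool) (hm : 0 < w.length) (hno : ¬ Occurs w X) :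
    none ∉ InfOcc (mf w) (some (⟨0, hm⟩, true)) X := by
  intro hmem
  obtain ⟨n, hn⟩ := hmem.exists
  rcases machine_run w hm X n with ⟨-, hocc⟩ | hsome
  · exact hno hocc
  · rw [hn] at hsome
    cases hsome

lemma machine_never_none (w : List Bool) (hm : 0 < w.length) (Y : ℕ → Bool)
    (h : none ∉ InfOcc (mf w) (some (⟨0, hm⟩, true)) Y) :
    ∀ n, run (mf w) (some (⟨0, hm⟩, true)) Y n ≠ none := by
  intro n hn
  apply h
  rw [InfOcc, Set.mem_setOf_eq, Filter.frequently_atTop]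
  intro N
  exact ⟨n + N, Nat.le_add_left N n, machine_absorb w hm Y n N hn⟩

lemma machine_mismatch (w : List Bool) (hm : 0 < w.length) (Y : ℕ → Bool)
    (hnever : ∀ n, run (mf w) (some (⟨0, hm⟩, true)) Y n ≠ none) (j : ℕ) :
    ∃ i < w.length, Y (j * w.length + i) ≠ w.getD i false := by
  by_contra hcon
  push_neg at hcon
  set n := j * w.length + (w.length - 1) with hndef
  have hmod : n % w.length = w.length - 1 := by
    rw [hndef, Nat.mul_comm, Nat.mul_add_mod]
    exact Nat.mod_eq_of_lt (by omega)
  have hsub : n - n % w.length = j * w.length := by rw [hmod]; omega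
  rcases machine_run w hm Y n with ⟨hnone, -⟩ | hsome
  · exact hnever n hnone
  · apply hnever (n + 1)
    show mf w (run (mf w) (some (⟨0, hm⟩, true)) Y n) (Y n) = none
    rw [hsome]
    simp only [mf]
    have hcond : (decide (∀ k < n % w.length, Y (n - n % w.length + k) = w.getD k false)) = true
        ∧ Y n = w.getD (n % w.length) false := by
      constructor
      · exact decide_eq_true (fun k hk => by
          rw [hsub]
          exact hcon k (by omega))
      · rw [hmod]
        have := hcon (w.length - 1) (by omega)
        rw [← hndef] at this
        exact this
    rw [dif_neg (by simp; omega), if_pos hcond]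

end S9

namespace S9

lemma idx_lt {J m : ℕ} (j : Fin J) (i : Fin m) : (j : ℕ) * m + (i : ℕ) < J * m := by
  calc (j : ℕ) * m + (i : ℕ) < (j : ℕ) * m + m := by omega
    _ = ((j : ℕ) + 1) * m := by ring
    _ ≤ J * m := Nat.mul_le_mul_right m j.isLt

/-- Finset of length `J*m` bit patterns all of whose aligned blocks differ from `wpat`. -/
def blockBad (J m : ℕ) (wpat : Fin m → Bool) : Finset (Fin (J * m) → Bool) :=
  Finset.univ.filter
    (fun τ => ∀ j : Fin J, ∃ i : Fin m, τ ⟨(j : ℕ) * m + (i : ℕ), idx_lt j i⟩ ≠ wpat i)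

lemma card_ne_subtype (m : ℕ) (wpat : Fin m → Bool) :
    Fintype.card {v : Fin m → Bool // v ≠ wpat} = 2 ^ m - 1 := by
  classical
  have h1 : Fintype.card {v : Fin m → Bool // ¬ (v = wpat)} =
      Fintype.card (Fin m → Bool) - Fintype.card {v : Fin m → Bool // v = wpat} :=
    Fintype.card_subtype_compl _
  have h2 : Fintype.card {v : Fin m → Bool // v = wpat} = 1 := Fintype.card_subtype_eq wpat
  have h3 : Fintype.card (Fin m → Bool) = 2 ^ m := by simp
  calc Fintype.card {v : Fin m → Bool // v ≠ wpat}
      = Fintype.card {v : Fin m → Bool // ¬ (v = wpat)} := rfl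
    _ = 2 ^ m - 1 := by rw [h1, h2, h3]

lemma blockBad_card (J m : ℕ) (wpat : Fin m → Bool) :
    (blockBad J m wpat).card ≤ (2 ^ m - 1) ^ J := by
  classical
  rw [← Fintype.card_coe]
  have hcard : Fintype.card (Fin J → {v : Fin m → Bool // v ≠ wpat}) = (2 ^ m - 1) ^ J := by
    rw [Fintype.card_fun, card_ne_subtype, Fintype.card_fin]
  rw [← hcard]
  apply Fintype.card_le_of_injective
    (fun τ => fun j => ⟨fun i => (τ : Fin (J*m) → Bool) ⟨(j : ℕ) * m + (i : ℕ), idx_lt j i⟩,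
      by
        obtain ⟨i, hi⟩ := (Finset.mem_filter.mp τ.2).2 j
        intro hEq
        exact hi (congrFun hEq i)⟩)
  intro τ₁ τ₂ heq
  apply Subtype.ext
  funext idx
  have hm0 : 0 < m := by
    rcases Nat.eq_zero_or_pos m with h | h
    · exact absurd idx.isLt (by simp [h])
    · exact h
  have hjlt : (idx : ℕ) / m < J := by
    rw [Nat.div_lt_iff_lt_mul hm0]
    exact idx.isLt
  have hidx : ((idx : ℕ) / m) * m + (idx : ℕ) % m = (idx : ℕ) := Nat.div_add_mod' _ _
  have h := congrFun heq ⟨(idx : ℕ) / m, hjlt⟩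
  have h2 := congrFun (Subtype.ext_iff.mp h) ⟨(idx : ℕ) % m, Nat.mod_lt _ hm0⟩
  simpa [Fin.ext_iff, hidx] using h2

lemma machine_null (w : List Bool) (hm : 0 < w.length) :
    mu {Y : ℕ → Bool | none ∉ InfOcc (mf w) (some (⟨0, hm⟩, true)) Y} = 0 := by
  classical
  set m := w.length with hmdef
  set wpat : Fin m → Bool := fun i => w.getD (i : ℕ) false with hwpat
  set r : ENNReal := ((2 ^ m - 1 : ℕ) : ENNReal) * ((2 : ENNReal)⁻¹) ^ m with hr
  have hrlt : r < 1 := by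
    have h0 : ((2 : ENNReal)⁻¹) ^ m ≠ 0 :=
      pow_ne_zero _ (ENNReal.inv_ne_zero.mpr (by norm_num))
    have ht : ((2 : ENNReal)⁻¹) ^ m ≠ ⊤ :=
      ENNReal.pow_ne_top (ENNReal.inv_ne_top.mpr (by norm_num))
    have h1 : ((2 ^ m - 1 : ℕ) : ENNReal) < ((2 ^ m : ℕ) : ENNReal) := by
      exact_mod_cast Nat.sub_lt (Nat.pow_pos (by norm_num)) one_pos
    calc r < ((2 ^ m : ℕ) : ENNReal) * ((2 : ENNReal)⁻¹) ^ m := by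
          rw [hr]
          exact ENNReal.mul_lt_mul_left h0 ht h1
      _ = 1 := by
          push_cast
          rw [← mul_pow]
          norm_num [ENNReal.mul_inv_cancel]
  apply mu_null_of_le (fun J => r ^ J)
  · intro J
    have hsub : {Y : ℕ → Bool | none ∉ InfOcc (mf w) (some (⟨0, hm⟩, true)) Y} ⊆
        ⋃ τ ∈ blockBad J m wpat, cylF (J * m) τ := by
      intro Y hY
      have hnever := machine_never_none w hm Y hY
      refine Set.mem_iUnion.mpr ⟨fun idx : Fin (J * m) => Y (idx : ℕ),
        Set.mem_iUnion.mpr ⟨?_, ?_⟩⟩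
      · rw [blockBad, Finset.mem_filter]
        refine ⟨Finset.mem_univ _, fun j => ?_⟩
        obtain ⟨i, hi, hne⟩ := machine_mismatch w hm Y hnever (j : ℕ)
        exact ⟨⟨i, hi⟩, by simpa [hwpat, List.getD, List.getElem?_eq_getElem hi] using hne⟩
      · intro j
        rfl
    calc mu {Y : ℕ → Bool | none ∉ InfOcc (mf w) (some (⟨0, hm⟩, true)) Y}
        ≤ (blockBad J m wpat).card * ((2 : ENNReal)⁻¹) ^ (J * m) := mu_le_card _ hsub
      _ ≤ (((2 ^ m - 1) ^ J : ℕ) : ENNReal) * ((2 : ENNReal)⁻¹) ^ (J * m) := by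
          gcongr
          exact_mod_cast blockBad_card J m wpat
      _ = r ^ J := by
          rw [hr, mul_pow, Nat.cast_pow, mul_comm J m, pow_mul]
  · exact ENNReal.tendsto_pow_atTop_nhds_zero_of_lt_one hrlt

lemma reverse_direction (X : ℕ → Bool) (h : ¬ Disjunctive X) :
    ∃ (S : Type) (_ : Fintype S) (f : S → Bool → S) (s₀ : S) (𝔉 : Set (Set S)),
      mu {Y : ℕ → Bool | InfOcc f s₀ Y ∈ 𝔉} = 0 ∧ InfOcc f s₀ X ∈ 𝔉 := by
  rw [Disjunctive, not_forall] at h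
  obtain ⟨w, hw⟩ := h
  have hm : 0 < w.length := by
    rcases w with _ | ⟨b, w'⟩
    · exact absurd ⟨0, by simp⟩ hw
    · simp
  exact ⟨Option (Fin w.length × Bool), inferInstance, mf w, some (⟨0, hm⟩, true),
    {A | none ∉ A}, machine_null w hm, machine_accepts X w hm hw⟩

end S9

namespace S9

/-- Extend a finite bit vector by `false`s. -/
def extF {M : ℕ} (τ : Fin M → Bool) : ℕ → Bool := fun i => if h : i < M then τ ⟨i, h⟩ else false

lemma extF_lt {M : ℕ} (τ : Fin M → Bool) (i : ℕ) (h : i < M) : extF τ i = τ ⟨i, h⟩ :=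
  dif_pos h

lemma run_stay {S : Type*} (f : S → Bool → S) (C : Set S)
    (hCc : ∀ s ∈ C, ∀ b, f s b ∈ C) (s₀ : S) (Z : ℕ → Bool) (n₁ : ℕ)
    (h : run f s₀ Z n₁ ∈ C) : ∀ n, n₁ ≤ n → run f s₀ Z n ∈ C := by
  intro n hn
  induction n, hn using Nat.le_induction with
  | base => exact h
  | succ n hn ih => exact hCc _ ih (Z n)

open scoped Classical in
/-- Patterns of length `N + j*L` that agree with `X` below `n₁` and whose run avoids `c`
on `[N, N + j*L]`. -/
noncomputable def avoidA {S : Type*} (f : S → Bool → S) (s₀ : S) (X : ℕ → Bool) (c : S)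
    (n₁ N L j : ℕ) : Finset (Fin (N + j * L) → Bool) :=
  Finset.univ.filter (fun τ : Fin (N + j * L) → Bool =>
    (∀ k, k < n₁ → ∀ h : k < N + j * L, τ ⟨k, h⟩ = X k) ∧
    ∀ n, N ≤ n → n ≤ N + j * L → run f s₀ (extF τ) n ≠ c)

lemma mem_avoidA {S : Type*} {f : S → Bool → S} {s₀ : S} {X : ℕ → Bool} {c : S}
    {n₁ N L j : ℕ} {τ : Fin (N + j * L) → Bool} :
    τ ∈ avoidA f s₀ X c n₁ N L j ↔
      ((∀ k, k < n₁ → ∀ h : k < N + j * L, τ ⟨k, h⟩ = X k) ∧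
       ∀ n, N ≤ n → n ≤ N + j * L → run f s₀ (extF τ) n ≠ c) := by
  rw [avoidA]
  simp [Finset.mem_filter]

lemma avoidA_card_zero {S : Type*} (f : S → Bool → S) (s₀ : S) (X : ℕ → Bool) (c : S)
    (n₁ N L : ℕ) : (avoidA f s₀ X c n₁ N L 0).card ≤ 2 ^ N := by
  classical
  calc (avoidA f s₀ X c n₁ N L 0).card
      ≤ (Finset.univ : Finset (Fin (N + 0 * L) → Bool)).card := Finset.card_le_card (by
        rw [avoidA]; exact Finset.filter_subset _ _)
    _ = 2 ^ N := by simp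

lemma avoidA_card_succ {S : Type*} [Fintype S] (f : S → Bool → S) (s₀ : S) (X : ℕ → Bool)
    (C : Set S) (hCc : ∀ s ∈ C, ∀ b, f s b ∈ C) (c : S) (n₁ N L : ℕ)
    (hstartX : run f s₀ X n₁ ∈ C) (hN : n₁ ≤ N)
    (hwrd : ∀ u ∈ C, ∃ z : List Bool, z.length < L ∧ act f u z = c) (j : ℕ) :
    (avoidA f s₀ X c n₁ N L (j + 1)).card ≤ (avoidA f s₀ X c n₁ N L j).card * (2 ^ L - 1) := by
  classical
  have harith : N + (j + 1) * L = N + j * L + L := by ring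
  -- the restriction and chunk maps
  set M := N + j * L with hM
  set M' := N + (j + 1) * L with hM'
  have hMM : M ≤ M' := by omega
  -- choice of escape words
  choose! zfun hzlen hzact using hwrd
  -- the forbidden chunk for a given pattern
  set χ : (Fin M → Bool) → (Fin L → Bool) :=
    fun ρ i => (zfun (run f s₀ (extF ρ) M)).getD (i : ℕ) false with hχ
  -- the injection into the sigma type
  have key : ∀ τ' ∈ avoidA f s₀ X c n₁ N L (j + 1),
      (fun k : Fin M => τ' ⟨(k : ℕ), by omega⟩) ∈ avoidA f s₀ X c n₁ N L j ∧
      (fun i : Fin L => τ' ⟨M + (i : ℕ), by omega⟩) ≠ χ (fun k : Fin M => τ' ⟨(k : ℕ), by omega⟩) := by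
    intro τ' hτ'
    obtain ⟨hpre, havoid⟩ := mem_avoidA.mp hτ'
    set ρ : Fin M → Bool := fun k => τ' ⟨(k : ℕ), by omega⟩ with hρ
    have hagree : ∀ k, k < M → extF ρ k = extF τ' k := by
      intro k hk
      rw [extF_lt ρ k hk, extF_lt τ' k (by omega)]
    have hrun_eq : ∀ n, n ≤ M → run f s₀ (extF ρ) n = run f s₀ (extF τ') n := by
      intro n hn
      exact run_congr f s₀ _ n (fun k hk => hagree k (by omega))
    have hρmem : ρ ∈ avoidA f s₀ X c n₁ N L j := by
      rw [mem_avoidA]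
      constructor
      · intro k hk h
        exact hpre k hk (by omega)
      · intro n hn1 hn2 hrc
        exact havoid n hn1 (by omega) (by rw [← hrun_eq n hn2]; exact hrc)
    refine ⟨hρmem, ?_⟩
    -- if the chunk were the forbidden one, the run would hit c
    intro hEq
    -- the state at time M is in C
    have hXτ : run f s₀ (extF τ') n₁ = run f s₀ X n₁ := by
      apply run_congr
      intro k hk
      rw [extF_lt τ' k (by omega)]
      exact hpre k hk (by omega)
    have hstate : run f s₀ (extF τ') M ∈ C :=
      run_stay f C hCc s₀ (extF τ') n₁ (by rw [hXτ]; exact hstartX) M (by omega)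
    have hstate' : run f s₀ (extF ρ) M ∈ C := by rw [hrun_eq M le_rfl]; exact hstate
    set u := run f s₀ (extF ρ) M with hu
    have hzl : (zfun u).length < L := hzlen u hstate'
    have hza : act f u (zfun u) = c := hzact u hstate'
    -- the run of extF τ' reads exactly `zfun u` from time M
    have hseg : seg (extF τ') M (zfun u).length = zfun u := by
      apply List.ext_getElem
      · rw [seg_length]
      · intro i h1 h2
        rw [seg_getElem]
        have hiL : i < L := by omega
        have hiM' : M + i < M' := by omega
        rw [extF_lt τ' (M + i) hiM']
        have := congrFun hEq ⟨i, hiL⟩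
        simp only at this
        rw [this, hχ]
        simp only [← hu]
        exact List.getD_eq_getElem _ _ h2
    have hhit : run f s₀ (extF τ') (M + (zfun u).length) = c := by
      rw [run_add, ← hrun_eq M le_rfl, ← hu, hseg, hza]
    exact havoid (M + (zfun u).length) (by omega) (by omega) hhit
  -- now count via the sigma set
  have hinj : ∀ τ₁ ∈ avoidA f s₀ X c n₁ N L (j + 1), ∀ τ₂ ∈ avoidA f s₀ X c n₁ N L (j + 1),
      (⟨fun k : Fin M => τ₁ ⟨(k : ℕ), by omega⟩, fun i : Fin L => τ₁ ⟨M + (i : ℕ), by omega⟩⟩ :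
        Σ _ : Fin M → Bool, Fin L → Bool) =
      ⟨fun k : Fin M => τ₂ ⟨(k : ℕ), by omega⟩, fun i : Fin L => τ₂ ⟨M + (i : ℕ), by omega⟩⟩ →
      τ₁ = τ₂ := by
    intro τ₁ _ τ₂ _ h
    have h1 : (fun k : Fin M => τ₁ ⟨(k : ℕ), by omega⟩) = fun k : Fin M => τ₂ ⟨(k : ℕ), by omega⟩ :=
      congrArg Sigma.fst h
    have h2 : (fun i : Fin L => τ₁ ⟨M + (i : ℕ), by omega⟩) =
        fun i : Fin L => τ₂ ⟨M + (i : ℕ), by omega⟩ := by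
      have := (Sigma.mk.inj_iff.mp h).2
      exact eq_of_heq this
    funext idx
    rcases Nat.lt_or_ge (idx : ℕ) M with hlt | hge
    · have := congrFun h1 ⟨(idx : ℕ), hlt⟩
      simpa [Fin.ext_iff] using this
    · have hiL : (idx : ℕ) - M < L := by
        have := idx.isLt
        omega
      have := congrFun h2 ⟨(idx : ℕ) - M, hiL⟩
      simp only at this
      have hval : M + ((idx : ℕ) - M) = (idx : ℕ) := by omega
      simpa [Fin.ext_iff, hval] using this
  calc (avoidA f s₀ X c n₁ N L (j + 1)).card
      ≤ ((avoidA f s₀ X c n₁ N L j).sigma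
          (fun ρ => (Finset.univ : Finset (Fin L → Bool)).erase (χ ρ))).card := by
        apply Finset.card_le_card_of_injOn
          (fun τ' => ⟨fun k : Fin M => τ' ⟨(k : ℕ), by omega⟩,
            fun i : Fin L => τ' ⟨M + (i : ℕ), by omega⟩⟩)
        · intro τ' hτ'
          rw [Finset.mem_coe, Finset.mem_sigma]
          exact ⟨(key τ' hτ').1, Finset.mem_erase.mpr ⟨(key τ' hτ').2, Finset.mem_univ _⟩⟩
        · intro τ₁ h₁ τ₂ h₂ h
          exact hinj τ₁ h₁ τ₂ h₂ h
    _ = (avoidA f s₀ X c n₁ N L j).card * (2 ^ L - 1) := by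
        rw [Finset.card_sigma]
        have : ∀ ρ, ((Finset.univ : Finset (Fin L → Bool)).erase (χ ρ)).card = 2 ^ L - 1 := by
          intro ρ
          rw [Finset.card_erase_of_mem (Finset.mem_univ _), Finset.card_univ]
          simp
        rw [Finset.sum_congr rfl (fun ρ _ => this ρ), Finset.sum_const, smul_eq_mul]

end S9

namespace S9

lemma pow_half_mul_pow_two (n : ℕ) : (2:ENNReal) ^ n * ((2:ENNReal)⁻¹) ^ n = 1 := by
  rw [← mul_pow]
  norm_num [ENNReal.mul_inv_cancel]

lemma r_lt_one {L : ℕ} (hL : 1 ≤ L) :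
    ((2 ^ L - 1 : ℕ) : ENNReal) * ((2:ENNReal)⁻¹) ^ L < 1 := by
  have h0 : ((2 : ENNReal)⁻¹) ^ L ≠ 0 :=
    pow_ne_zero _ (ENNReal.inv_ne_zero.mpr (by norm_num))
  have ht : ((2 : ENNReal)⁻¹) ^ L ≠ ⊤ :=
    ENNReal.pow_ne_top (ENNReal.inv_ne_top.mpr (by norm_num))
  have h1 : ((2 ^ L - 1 : ℕ) : ENNReal) < ((2 ^ L : ℕ) : ENNReal) := by
    exact_mod_cast Nat.sub_lt (Nat.pow_pos (by norm_num)) one_pos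
  calc ((2 ^ L - 1 : ℕ) : ENNReal) * ((2:ENNReal)⁻¹) ^ L
      < ((2 ^ L : ℕ) : ENNReal) * ((2:ENNReal)⁻¹) ^ L := ENNReal.mul_lt_mul_left h0 ht h1
    _ = 1 := by push_cast; exact pow_half_mul_pow_two L

lemma avoid_null {S : Type*} [Fintype S] (f : S → Bool → S) (s₀ : S) (X : ℕ → Bool)
    (C : Set S) (hCc : ∀ s ∈ C, ∀ b, f s b ∈ C) (c : S) (hc : c ∈ C)
    (hreach : ∀ u ∈ C, ∃ z : List Bool, act f u z = c)
    (n₁ : ℕ) (hstartX : run f s₀ X n₁ ∈ C) (N : ℕ) (hN : n₁ ≤ N) :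
    mu (cylF n₁ (fun j => X (j : ℕ)) ∩ {Y | ∀ n, N ≤ n → run f s₀ Y n ≠ c}) = 0 := by
  classical
  choose! zf hzf using hreach
  set L := (Finset.univ.sup (fun u : S => (zf u).length)) + 1 with hLdef
  have hL1 : 1 ≤ L := by omega
  have hwrd : ∀ u ∈ C, ∃ z : List Bool, z.length < L ∧ act f u z = c := by
    intro u hu
    refine ⟨zf u, ?_, hzf u hu⟩
    have h2 : (zf u).length ≤ Finset.univ.sup (fun u : S => (zf u).length) :=
      Finset.le_sup (f := fun u : S => (zf u).length) (Finset.mem_univ u)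
    omega
  have hcard : ∀ j, (avoidA f s₀ X c n₁ N L j).card ≤ 2 ^ N * (2 ^ L - 1) ^ j := by
    intro j
    induction j with
    | zero => simpa using avoidA_card_zero f s₀ X c n₁ N L
    | succ j ih =>
      calc (avoidA f s₀ X c n₁ N L (j+1)).card
          ≤ (avoidA f s₀ X c n₁ N L j).card * (2 ^ L - 1) :=
            avoidA_card_succ f s₀ X C hCc c n₁ N L hstartX hN hwrd j
        _ ≤ (2 ^ N * (2 ^ L - 1) ^ j) * (2 ^ L - 1) := Nat.mul_le_mul_right _ ih
        _ = 2 ^ N * (2 ^ L - 1) ^ (j + 1) := by ring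
  set E := cylF n₁ (fun j => X (j : ℕ)) ∩ {Y | ∀ n, N ≤ n → run f s₀ Y n ≠ c} with hE
  have hsub : ∀ j, E ⊆ ⋃ τ ∈ avoidA f s₀ X c n₁ N L j, cylF (N + j * L) τ := by
    intro j Y hY
    obtain ⟨hY1, hY2⟩ := hY
    refine Set.mem_iUnion.mpr ⟨fun idx : Fin (N + j * L) => Y (idx : ℕ),
      Set.mem_iUnion.mpr ⟨?_, ?_⟩⟩
    · rw [mem_avoidA]
      constructor
      · intro k hk h
        exact hY1 ⟨k, hk⟩
      · intro n hn1 hn2 hrc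
        have hagree : run f s₀ Y n = run f s₀ (extF (fun idx : Fin (N + j * L) => Y (idx : ℕ))) n :=
          run_congr f s₀ Y n (fun k hk =>
            (extF_lt (fun idx : Fin (N + j * L) => Y (idx : ℕ)) k (by omega)).symm)
        exact hY2 n hn1 (by rw [hagree]; exact hrc)
    · intro idx
      rfl
  set r : ENNReal := ((2 ^ L - 1 : ℕ) : ENNReal) * ((2:ENNReal)⁻¹) ^ L with hr
  apply mu_null_of_le (fun j => r ^ j)
  · intro j
    have hsplit : ((2 ^ N * (2 ^ L - 1) ^ j : ℕ) : ENNReal) =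
        (2:ENNReal) ^ N * (((2 ^ L - 1 : ℕ) : ENNReal)) ^ j := by
      rw [Nat.cast_mul, Nat.cast_pow, Nat.cast_pow]
      norm_num
    have hpow : ((2:ENNReal)⁻¹) ^ (N + j * L) = ((2:ENNReal)⁻¹) ^ N * (((2:ENNReal)⁻¹) ^ L) ^ j := by
      rw [pow_add, mul_comm j L, pow_mul]
    calc mu E ≤ (avoidA f s₀ X c n₁ N L j).card * ((2:ENNReal)⁻¹) ^ (N + j * L) :=
          mu_le_card _ (hsub j)
      _ ≤ ((2 ^ N * (2 ^ L - 1) ^ j : ℕ) : ENNReal) * ((2:ENNReal)⁻¹) ^ (N + j * L) := by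
          gcongr
          exact_mod_cast hcard j
      _ = ((2:ENNReal) ^ N * ((2:ENNReal)⁻¹) ^ N) *
            ((((2 ^ L - 1 : ℕ) : ENNReal)) * ((2:ENNReal)⁻¹) ^ L) ^ j := by
          rw [hsplit, hpow, mul_pow]
          ring
      _ = r ^ j := by rw [pow_half_mul_pow_two, one_mul, hr]
  · exact ENNReal.tendsto_pow_atTop_nhds_zero_of_lt_one (hr ▸ r_lt_one hL1)

lemma forward_direction {S : Type*} [Fintype S] (f : S → Bool → S) (s₀ : S) (X : ℕ → Bool)
    (hX : Disjunctive X) (𝔉 : Set (Set S)) (hF : InfOcc f s₀ X ∈ 𝔉) :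
    mu {Y : ℕ → Bool | InfOcc f s₀ Y ∈ 𝔉} ≠ 0 := by
  classical
  set C := InfOcc f s₀ X with hC
  have hCc : ∀ s ∈ C, ∀ b, f s b ∈ C := infOcc_closed f s₀ X hX
  obtain ⟨c₀, hc₀⟩ := infOcc_nonempty f s₀ X
  obtain ⟨n₁, hn₁⟩ := (hc₀ : ∃ᶠ n in Filter.atTop, run f s₀ X n = c₀).exists
  have hstartX : run f s₀ X n₁ ∈ C := by rw [hn₁]; exact hc₀
  set B := cylF n₁ (fun j => X (j : ℕ)) with hB
  -- any Y in B has its run in C from time n₁ on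
  have hrunB : ∀ Y ∈ B, ∀ n, n₁ ≤ n → run f s₀ Y n ∈ C := by
    intro Y hY n hn
    have h1 : run f s₀ Y n₁ = run f s₀ X n₁ :=
      run_congr f s₀ Y n₁ (fun k hk => hY ⟨k, hk⟩)
    exact run_stay f C hCc s₀ Y n₁ (by rw [h1]; exact hstartX) n hn
  -- the bad sets
  set Bad : Set (ℕ → Bool) := ⋃ (c : S) (N : ℕ),
    (if c ∈ C then B ∩ {Y | ∀ n, max N n₁ ≤ n → run f s₀ Y n ≠ c} else ∅) with hBad
  have hBadNull : mu Bad = 0 := by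
    rw [hBad]
    refine measure_iUnion_null fun c => measure_iUnion_null fun N => ?_
    split_ifs with hcC
    · exact avoid_null f s₀ X C hCc c hcC
        (fun u hu => reach_of_infOcc f s₀ X hu hcC)
        n₁ hstartX (max N n₁) (le_max_right N n₁)
    · simp
  -- B is covered by the language and Bad
  have hcover : B ⊆ {Y : ℕ → Bool | InfOcc f s₀ Y ∈ 𝔉} ∪ Bad := by
    intro Y hY
    by_cases hgood : InfOcc f s₀ Y ∈ 𝔉
    · exact Or.inl hgood
    · right
      have hsubC : InfOcc f s₀ Y ⊆ C := by
        intro s hs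
        obtain ⟨n, hn, heq⟩ := Filter.frequently_atTop.mp hs n₁
        rw [← heq]
        exact hrunB Y hY n hn
      have hneq : InfOcc f s₀ Y ≠ C := fun h => hgood (h ▸ hF)
      have hmiss : ∃ c ∈ C, c ∉ InfOcc f s₀ Y := by
        by_contra hall
        push_neg at hall
        exact hneq (Set.Subset.antisymm hsubC hall)
      obtain ⟨c, hcC, hcnot⟩ := hmiss
      have hev : ∀ᶠ n in Filter.atTop, run f s₀ Y n ≠ c := Filter.not_frequently.mp hcnot
      obtain ⟨N, hN⟩ := Filter.eventually_atTop.mp hev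
      rw [hBad]
      refine Set.mem_iUnion.mpr ⟨c, Set.mem_iUnion.mpr ⟨N, ?_⟩⟩
      rw [if_pos hcC]
      exact ⟨hY, fun n hn => hN n (le_trans (le_max_left N n₁) hn)⟩
  intro hzero
  have hBmu : mu B = ((2:ENNReal)⁻¹) ^ n₁ := mu_cylF n₁ _
  have : mu B ≤ 0 := by
    calc mu B ≤ mu ({Y : ℕ → Bool | InfOcc f s₀ Y ∈ 𝔉} ∪ Bad) := measure_mono hcover
      _ ≤ mu {Y : ℕ → Bool | InfOcc f s₀ Y ∈ 𝔉} + mu Bad := measure_union_le _ _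
      _ = 0 := by rw [hzero, hBadNull, add_zero]
  rw [hBmu] at this
  exact pow_ne_zero n₁ (ENNReal.inv_ne_zero.mpr (by norm_num)) (le_antisymm this zero_le)

end S9

/-- `X` is accepted by some deterministic Muller automaton of measure zero
iff `X` is not disjunctive. -/
theorem stmt9 (X : ℕ → Bool) :
    (∃ (S : Type) (_ : Fintype S) (f : S → Bool → S) (s₀ : S) (𝔉 : Set (Set S)),
        mu {Y : ℕ → Bool | InfOcc f s₀ Y ∈ 𝔉} = 0 ∧ InfOcc f s₀ X ∈ 𝔉) ↔
      ¬ Disjunctive X := by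
  constructor
  · rintro ⟨S, _inst, f, s₀, 𝔉, h0, hXmem⟩ hdisj
    exact S9.forward_direction f s₀ X hdisj 𝔉 hXmem h0
  · exact S9.reverse_direction X
end

section
/- For every automatic randomness test (I, U), there exists a deterministic Büchi automaton M over Bool (on some finite state type) such that μ(L(M)) = 0 and L(M) equals the covering region F(I, U). -/
open MeasureTheory Filter

namespace Stmt10

/-! ### Words and prefixes -/

def pre (X : ℕ → Bool) (n : ℕ) : List Bool := List.ofFn fun k : Fin n => X k

@[simp] lemma length_pre (X : ℕ → Bool) (n : ℕ) : (pre X n).length = n := by simp [pre]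

@[simp] lemma pre_zero (X : ℕ → Bool) : pre X 0 = [] := by simp [pre]

lemma pre_succ (X : ℕ → Bool) (n : ℕ) : pre X (n + 1) = pre X n ++ [X n] := by
  rw [pre, List.ofFn_succ', List.concat_eq_append]
  rfl

lemma pre_getElem?_lt (X : ℕ → Bool) {k n : ℕ} (h : k < n) : (pre X n)[k]? = some (X k) := by
  rw [List.getElem?_eq_getElem (by simpa using h)]
  simp [pre, List.getElem_ofFn]

lemma pre_getElem?_ge (X : ℕ → Bool) {k n : ℕ} (h : n ≤ k) : (pre X n)[k]? = none :=
  List.getElem?_eq_none (by simpa using h)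

lemma isPrefixOfSeq_pre (X : ℕ → Bool) (n : ℕ) : IsPrefixOfSeq (pre X n) X := by
  intro k hk
  rw [length_pre] at hk
  rw [List.getD_eq_getElem _ _ (by simpa using hk)]
  simp [pre, List.getElem_ofFn]

lemma eq_pre_of_isPrefix {w : List Bool} {X : ℕ → Bool} (h : IsPrefixOfSeq w X) :
    w = pre X w.length := by
  apply List.ext_getElem?
  intro k
  by_cases hk : k < w.length
  · rw [List.getElem?_eq_getElem hk, pre_getElem?_lt _ hk]
    have := h k hk
    rw [List.getD_eq_getElem _ _ hk] at this
    rw [this]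
  · rw [List.getElem?_eq_none (Nat.le_of_not_lt hk), pre_getElem?_ge _ (Nat.le_of_not_lt hk)]

lemma mem_cyl_iff {L : Set (List Bool)} {X : ℕ → Bool} : X ∈ cyl L ↔ ∃ n, pre X n ∈ L := by
  constructor
  · rintro ⟨w, hw, hpre⟩
    exact ⟨w.length, (eq_pre_of_isPrefix hpre) ▸ hw⟩
  · rintro ⟨n, hn⟩
    exact ⟨pre X n, hn, isPrefixOfSeq_pre X n⟩

/-! ### Convolution lemmas -/

lemma conv_getElem? (x i : List Bool) {k : ℕ} (hk : k < max x.length i.length) :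
    (conv x i)[k]? = some (x[k]?, i[k]?) := by
  unfold conv
  rw [List.getElem?_map, List.getElem?_range hk]
  rfl

@[simp] lemma length_conv (x i : List Bool) : (conv x i).length = max x.length i.length := by
  simp [conv]

lemma conv_injective {x i x' i' : List Bool} (h : conv x i = conv x' i') :
    x = x' ∧ i = i' := by
  have hlen : max x.length i.length = max x'.length i'.length := by
    have := congrArg List.length h
    simpa using this
  have key : ∀ k : ℕ, x[k]? = x'[k]? ∧ i[k]? = i'[k]? := by
    intro k
    by_cases hk : k < max x.length i.length
    · have h1 := conv_getElem? x i hk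
      have h2 := conv_getElem? x' i' (hlen ▸ hk)
      rw [h, h2] at h1
      have := Option.some.inj h1
      exact ⟨(congrArg Prod.fst this).symm, (congrArg Prod.snd this).symm⟩
    · push_neg at hk
      constructor
      · rw [List.getElem?_eq_none (le_trans (le_max_left _ _) hk),
          List.getElem?_eq_none (le_trans (le_max_left _ _) (hlen ▸ hk))]
      · rw [List.getElem?_eq_none (le_trans (le_max_right _ _) hk),
          List.getElem?_eq_none (le_trans (le_max_right _ _) (hlen ▸ hk))]
  exact ⟨List.ext_getElem? fun k => (key k).1, List.ext_getElem? fun k => (key k).2⟩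

lemma conv_snoc_aux {x i x' i' : List Bool} {M : ℕ}
    (hM : max x.length i.length = M) (hM' : max x'.length i'.length = M + 1)
    (hp : ∀ k < M, x'[k]? = x[k]? ∧ i'[k]? = i[k]?) :
    conv x' i' = conv x i ++ [(x'[M]?, i'[M]?)] := by
  unfold conv
  rw [hM, hM', List.range_succ, List.map_append]
  congr 1
  apply List.map_congr_left
  intro k hk
  have hk2 := hp k (List.mem_range.mp hk)
  show (x'[k]?, i'[k]?) = (x[k]?, i[k]?)
  rw [hk2.1, hk2.2]

lemma conv_snoc_right {x i : List Bool} (c : Bool) (h : x.length ≤ i.length) :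
    conv x (i ++ [c]) = conv x i ++ [((none : Option Bool), some c)] := by
  have h0 : max x.length (i ++ [c]).length = i.length + 1 := by
    rw [List.length_append, List.length_singleton]
    exact max_eq_right (le_trans h (Nat.le_succ _))
  have := conv_snoc_aux (x := x) (i := i) (x' := x) (i' := i ++ [c]) (M := i.length)
    (max_eq_right h) h0 (fun k hk => ⟨rfl, List.getElem?_append_left hk⟩)
  rw [this, List.getElem?_eq_none h, List.getElem?_concat_length]

lemma conv_snoc_left {x i : List Bool} (b : Bool) (h : i.length ≤ x.length) :
    conv (x ++ [b]) i = conv x i ++ [(some b, (none : Option Bool))] := by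
  have h0 : max (x ++ [b]).length i.length = x.length + 1 := by
    rw [List.length_append, List.length_singleton]
    exact max_eq_left (le_trans h (Nat.le_succ _))
  have := conv_snoc_aux (x := x) (i := i) (x' := x ++ [b]) (i' := i) (M := x.length)
    (max_eq_left h) h0 (fun k hk => ⟨List.getElem?_append_left hk, rfl⟩)
  rw [this, List.getElem?_eq_none h, List.getElem?_concat_length]

lemma conv_snoc_both {x i : List Bool} (b c : Bool) (h : x.length = i.length) :
    conv (x ++ [b]) (i ++ [c]) = conv x i ++ [(some b, some c)] := by
  have h0 : max (x ++ [b]).length (i ++ [c]).length = x.length + 1 := by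
    simp [h]
  have := conv_snoc_aux (x := x) (i := i) (x' := x ++ [b]) (i' := i ++ [c]) (M := x.length)
    (by simp [h]) h0
    (fun k hk => ⟨List.getElem?_append_left hk, List.getElem?_append_left (h ▸ hk)⟩)
  rw [this, List.getElem?_concat_length]
  have : (i ++ [c])[x.length]? = some c := by rw [h]; exact List.getElem?_concat_length
  rw [this]

lemma act_concat {S A : Type*} (f : S → A → S) (s : S) (w : List A) (a : A) :
    act f s (w ++ [a]) = f (act f s w) a := by
  simp [act, List.foldl_append]

lemma conv_pre_succ_right {X : ℕ → Bool} {m n : ℕ} {i : List Bool} (hi : i.length = n)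
    (hm : m ≤ n) (c : Bool) :
    conv (pre X m) (i ++ [c]) = conv (pre X m) i ++ [((none : Option Bool), some c)] :=
  conv_snoc_right c (by simp [hi, hm])

lemma conv_pre_succ_both {X : ℕ → Bool} {n : ℕ} {i : List Bool} (hi : i.length = n) (c : Bool) :
    conv (pre X (n + 1)) (i ++ [c]) = conv (pre X n) i ++ [(some (X n), some c)] := by
  rw [pre_succ]
  exact conv_snoc_both _ _ (by simp [hi])

lemma conv_pre_succ_left {X : ℕ → Bool} {m : ℕ} {i : List Bool} (hm : i.length ≤ m) :
    conv (pre X (m + 1)) i = conv (pre X m) i ++ [(some (X m), (none : Option Bool))] := by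
  rw [pre_succ]
  exact conv_snoc_left _ (by simpa using hm)

/-! ### The Büchi automaton -/

structure Auto (P Q : Type) where
  fI : P → Bool → P
  a0 : P
  FI : Set P
  fA : Q → Option Bool × Option Bool → Q
  q0 : Q
  FA : Set Q

abbrev St (P Q : Type) : Type := Set (P × Q × Set Q) × Set Q × Set Q × Prop

namespace Auto

variable {P Q : Type} (A : Auto P Q)

def dA (b : Bool) (q : Q) : Q := A.fA q (some b, none)

def stepW (W : Set (P × Q × Set Q)) (b : Bool) : Set (P × Q × Set Q) :=
  {y | ∃ p q R, (p, q, R) ∈ W ∧ ∃ c : Bool,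
      y = (A.fI p c, A.fA q (some b, some c), (fun r => A.fA r (none, some c)) '' insert q R)}

def Tset (W : Set (P × Q × Set Q)) : Set Q :=
  {q | ∃ p R, (p, q, R) ∈ W ∧ p ∈ A.FI ∧ R ∩ A.FA = ∅}

open scoped Classical in
noncomputable def stepM (s : St P Q) (b : Bool) : St P Q :=
  (A.stepW s.1 b,
   (A.dA b '' s.2.1 ∪ A.Tset (A.stepW s.1 b)) \ A.FA,
   if (A.dA b '' s.2.2.1) \ A.FA = ∅ then (A.dA b '' s.2.1 ∪ A.Tset (A.stepW s.1 b)) \ A.FA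
     else (A.dA b '' s.2.2.1) \ A.FA,
   (A.dA b '' s.2.2.1) \ A.FA = ∅)

def W0 : Set (P × Q × Set Q) := {(A.a0, A.q0, ∅)}

noncomputable def init : St P Q := (A.W0, A.Tset A.W0 \ A.FA, A.Tset A.W0 \ A.FA, True)

variable (X : ℕ → Bool)

noncomputable def MRun (n : ℕ) : St P Q := run A.stepM A.init X n

noncomputable def Wn (n : ℕ) : Set (P × Q × Set Q) := (A.MRun X n).1
noncomputable def ALn (n : ℕ) : Set Q := (A.MRun X n).2.1
noncomputable def Pen (n : ℕ) : Set Q := (A.MRun X n).2.2.1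
def Flg (n : ℕ) : Prop := (A.MRun X n).2.2.2

lemma MRun_succ (n : ℕ) : A.MRun X (n + 1) = A.stepM (A.MRun X n) (X n) := by
  simp [MRun, run]

@[simp] lemma Wn_zero : A.Wn X 0 = A.W0 := rfl

lemma Wn_succ (n : ℕ) : A.Wn X (n + 1) = A.stepW (A.Wn X n) (X n) := by
  rw [Wn, MRun_succ]; rfl

@[simp] lemma ALn_zero : A.ALn X 0 = A.Tset A.W0 \ A.FA := rfl

lemma ALn_succ (n : ℕ) :
    A.ALn X (n + 1) = (A.dA (X n) '' A.ALn X n ∪ A.Tset (A.Wn X (n + 1))) \ A.FA := by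
  rw [ALn, MRun_succ, Wn_succ]; rfl

@[simp] lemma Pen_zero : A.Pen X 0 = A.Tset A.W0 \ A.FA := rfl

open scoped Classical in
lemma Pen_succ (n : ℕ) :
    A.Pen X (n + 1) = if (A.dA (X n) '' A.Pen X n) \ A.FA = ∅ then A.ALn X (n + 1)
      else (A.dA (X n) '' A.Pen X n) \ A.FA := rfl

lemma Pen_succ_of_empty {n : ℕ} (h : (A.dA (X n) '' A.Pen X n) \ A.FA = ∅) :
    A.Pen X (n + 1) = A.ALn X (n + 1) := by
  rw [Pen_succ, if_pos h]

lemma Pen_succ_of_ne {n : ℕ} (h : (A.dA (X n) '' A.Pen X n) \ A.FA ≠ ∅) :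
    A.Pen X (n + 1) = (A.dA (X n) '' A.Pen X n) \ A.FA := by
  rw [Pen_succ, if_neg h]

lemma Flg_succ (n : ℕ) : A.Flg X (n + 1) ↔ (A.dA (X n) '' A.Pen X n) \ A.FA = ∅ :=
  Iff.rfl

@[simp] lemma Flg_zero : A.Flg X 0 := trivial

/-! ### Obligation trajectories -/

def itr (k : ℕ) (q : Q) : ℕ → Q
  | 0 => q
  | j + 1 => A.dA (X (k + j)) (itr k q j)

@[simp] lemma itr_zero (k : ℕ) (q : Q) : A.itr X k q 0 = q := rfl

lemma itr_succ (k : ℕ) (q : Q) (j : ℕ) :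
    A.itr X k q (j + 1) = A.dA (X (k + j)) (A.itr X k q j) := rfl

lemma itr_succ_left (k : ℕ) (q : Q) (j : ℕ) :
    A.itr X k q (j + 1) = A.itr X (k + 1) (A.dA (X k) q) j := by
  induction j with
  | zero => rw [itr_succ, itr_zero, itr_zero, Nat.add_zero]
  | succ j ih =>
    rw [itr_succ, ih, itr_succ, show k + (j + 1) = (k + 1) + j by omega]

/-! ### The subset-construction invariant -/

def Rset (n : ℕ) (i : List Bool) : Set Q :=
  {r | ∃ m < n, r = act A.fA A.q0 (conv (pre X m) i)}

@[simp] lemma Rset_zero (i : List Bool) : A.Rset X 0 i = ∅ := by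
  ext r; simp [Rset]

lemma Rset_succ {n : ℕ} {i : List Bool} (hi : i.length = n) (c : Bool) :
    A.Rset X (n + 1) (i ++ [c]) =
      (fun r => A.fA r (none, some c)) ''
        insert (act A.fA A.q0 (conv (pre X n) i)) (A.Rset X n i) := by
  ext r
  simp only [Rset, Set.mem_setOf_eq, Set.mem_image, Set.mem_insert_iff]
  constructor
  · rintro ⟨m, hm, rfl⟩
    have hm' : m ≤ n := Nat.lt_succ_iff.mp hm
    rw [conv_pre_succ_right hi hm' c, act_concat]
    rcases eq_or_lt_of_le hm' with rfl | hlt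
    · exact ⟨_, Or.inl rfl, rfl⟩
    · exact ⟨_, Or.inr ⟨m, hlt, rfl⟩, rfl⟩
  · rintro ⟨r', h', rfl⟩
    rcases h' with rfl | ⟨m, hm, rfl⟩
    · exact ⟨n, Nat.lt_succ_self n, by rw [conv_pre_succ_right hi le_rfl c, act_concat]⟩
    · exact ⟨m, by omega, by rw [conv_pre_succ_right hi (by omega) c, act_concat]⟩

lemma Wn_eq (n : ℕ) : A.Wn X n =
    {y | ∃ i : List Bool, i.length = n ∧
      y = (act A.fI A.a0 i, act A.fA A.q0 (conv (pre X n) i), A.Rset X n i)} := by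
  induction n with
  | zero =>
    ext y
    simp only [Wn_zero, W0, Set.mem_singleton_iff, Set.mem_setOf_eq]
    constructor
    · rintro rfl
      refine ⟨[], rfl, ?_⟩
      have h1 : conv (pre X 0) [] = [] := by simp [conv]
      rw [h1, Rset_zero]
      rfl
    · rintro ⟨i, hlen, rfl⟩
      have : i = [] := List.eq_nil_of_length_eq_zero hlen
      subst this
      have h1 : conv (pre X 0) [] = [] := by simp [conv]
      rw [h1, Rset_zero]
      rfl
  | succ n ih =>
    rw [Wn_succ, ih]
    ext y
    simp only [stepW, Set.mem_setOf_eq]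
    constructor
    · rintro ⟨p, q, R, ⟨i, hlen, heq⟩, c, rfl⟩
      rw [Prod.ext_iff, Prod.ext_iff] at heq
      obtain ⟨h1, h2, h3⟩ := heq
      simp only at h1 h2 h3
      subst h1; subst h2; subst h3
      refine ⟨i ++ [c], by simp [hlen], ?_⟩
      rw [act_concat, conv_pre_succ_both hlen c, act_concat, Rset_succ A X hlen c]
    · rintro ⟨i', hlen, rfl⟩
      obtain ⟨i, c, rfl⟩ : ∃ i c, i' = i ++ [c] := by
        rcases List.eq_nil_or_concat i' with h | ⟨L, b, h⟩
        · rw [h] at hlen; simp at hlen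
        · exact ⟨L, b, by rw [h, List.concat_eq_append]⟩
      have hlen' : i.length = n := by simpa using hlen
      refine ⟨act A.fI A.a0 i, act A.fA A.q0 (conv (pre X n) i), A.Rset X n i,
        ⟨i, hlen', rfl⟩, c, ?_⟩
      rw [act_concat, conv_pre_succ_both hlen' c, act_concat, Rset_succ A X hlen' c]

lemma itr_act {n : ℕ} {i : List Bool} (hi : i.length ≤ n) (j : ℕ) :
    A.itr X n (act A.fA A.q0 (conv (pre X n) i)) j = act A.fA A.q0 (conv (pre X (n + j)) i) := by
  induction j with
  | zero => rfl
  | succ j ih =>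
    rw [itr_succ, ih, show n + (j + 1) = (n + j) + 1 from rfl,
      conv_pre_succ_left (X := X) (m := n + j) (i := i) (le_trans hi (Nat.le_add_right n j)),
      act_concat]
    rfl

/-! ### Obligations all die iff Büchi accepted -/

def AllDie : Prop := ∀ n, ∀ q ∈ A.Tset (A.Wn X n), ∃ j, A.itr X n q j ∈ A.FA

lemma Tset_diff_subset_ALn (n : ℕ) : A.Tset (A.Wn X n) \ A.FA ⊆ A.ALn X n := by
  cases n with
  | zero => rw [ALn_zero, Wn_zero]
  | succ n =>
    rw [ALn_succ]
    exact Set.diff_subset_diff_left Set.subset_union_right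

lemma ALn_disjoint_FA (n : ℕ) : ∀ q ∈ A.ALn X n, q ∉ A.FA := by
  cases n with
  | zero => rw [ALn_zero]; exact fun q hq => hq.2
  | succ n => rw [ALn_succ]; exact fun q hq => hq.2

lemma itr_mem_ALn {k : ℕ} {q : Q} (hq : q ∈ A.Tset (A.Wn X k))
    (hnever : ∀ j, A.itr X k q j ∉ A.FA) : ∀ j, A.itr X k q j ∈ A.ALn X (k + j) := by
  intro j
  induction j with
  | zero => exact A.Tset_diff_subset_ALn X k ⟨hq, hnever 0⟩
  | succ j ih =>
    rw [show k + (j + 1) = (k + j) + 1 from rfl, ALn_succ]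
    exact ⟨Or.inl ⟨A.itr X k q j, ih, (A.itr_succ X k q j).symm⟩, hnever (j + 1)⟩

lemma Pen_subset_ALn (n : ℕ) : A.Pen X n ⊆ A.ALn X n := by
  induction n with
  | zero => rw [Pen_zero, ALn_zero]
  | succ n ih =>
    by_cases h : (A.dA (X n) '' A.Pen X n) \ A.FA = ∅
    · rw [A.Pen_succ_of_empty X h]
    · rw [A.Pen_succ_of_ne X h, ALn_succ]
      exact Set.diff_subset_diff_left
        (le_trans (Set.image_mono ih) Set.subset_union_left)

lemma alive_good (hAD : A.AllDie X) :
    ∀ n, ∀ q ∈ A.ALn X n, ∃ j, A.itr X n q j ∈ A.FA := by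
  intro n
  induction n with
  | zero =>
    intro q hq
    rw [ALn_zero] at hq
    exact hAD 0 q (by rw [Wn_zero]; exact hq.1)
  | succ n ih =>
    intro q hq
    rw [ALn_succ] at hq
    obtain ⟨hmem, hnFA⟩ := hq
    rcases hmem with ⟨q', hq', rfl⟩ | hT
    · obtain ⟨j, hj⟩ := ih q' hq'
      have hq'nFA : q' ∉ A.FA := A.ALn_disjoint_FA X n q' hq'
      rcases j with _ | j
      · exact absurd hj hq'nFA
      · refine ⟨j, ?_⟩
        rw [← A.itr_succ_left X n q' j]
        exact hj
    · exact hAD (n + 1) q hT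

lemma flg_frequently_of_allDie [Finite Q] (hAD : A.AllDie X) :
    ∃ᶠ n in atTop, A.Flg X n := by
  rw [Filter.frequently_atTop]
  intro a
  by_contra hcon
  push_neg at hcon
  have hstep : ∀ m, a ≤ m → (A.dA (X m) '' A.Pen X m) \ A.FA ≠ ∅ ∧
      A.Pen X (m + 1) = (A.dA (X m) '' A.Pen X m) \ A.FA := by
    intro m hm
    have hflg := hcon (m + 1) (by omega)
    rw [A.Flg_succ X m] at hflg
    exact ⟨hflg, A.Pen_succ_of_ne X hflg⟩
  have claim1 : ∀ j, ∀ y ∈ A.Pen X (a + 1 + j), ∃ q ∈ A.Pen X (a + 1),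
      A.itr X (a + 1) q j = y ∧ ∀ j' ≤ j, A.itr X (a + 1) q j' ∉ A.FA := by
    intro j
    induction j with
    | zero =>
      intro y hy
      refine ⟨y, hy, rfl, ?_⟩
      intro j' hj'
      rw [Nat.le_zero.mp hj', itr_zero]
      rw [(hstep a le_rfl).2] at hy
      exact hy.2
    | succ j ih =>
      intro y hy
      rw [show a + 1 + (j + 1) = (a + 1 + j) + 1 from rfl,
        (hstep (a + 1 + j) (by omega)).2] at hy
      obtain ⟨⟨y', hy', rfl⟩, hnFA⟩ := hy
      obtain ⟨q, hq, hitr, hhist⟩ := ih y' hy'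
      refine ⟨q, hq, ?_, ?_⟩
      · rw [itr_succ, hitr]
      · intro j' hj'
        rcases Nat.lt_succ_iff_lt_or_eq.mp (Nat.lt_succ_of_le hj') with h | rfl
        · exact hhist j' (by omega)
        · rw [itr_succ, hitr]
          exact hnFA
  have hne : ∀ j : ℕ, ∃ y, y ∈ A.Pen X (a + 1 + j) := by
    intro j
    have h1 : a + 1 + j = (a + j) + 1 := by omega
    rw [h1, (hstep (a + j) (by omega)).2]
    exact Set.nonempty_def.mp (Set.nonempty_iff_ne_empty.mpr (hstep (a + j) (by omega)).1)
  have hexq : ∀ j : ℕ, ∃ q, q ∈ A.Pen X (a + 1) ∧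
      ∀ j' ≤ j, A.itr X (a + 1) q j' ∉ A.FA := by
    intro j
    obtain ⟨y, hy⟩ := hne j
    obtain ⟨q, hq, _, hhist⟩ := claim1 j y hy
    exact ⟨q, hq, hhist⟩
  choose g hg1 hg2 using hexq
  obtain ⟨q0, hq0⟩ := Finite.exists_infinite_fiber g
  have hq0inf : (g ⁻¹' {q0}).Infinite := Set.infinite_coe_iff.mp hq0
  obtain ⟨j0, hj0⟩ := hq0inf.nonempty
  have hq0mem : q0 ∈ A.Pen X (a + 1) := by
    have := hg1 j0
    rwa [hj0] at this
  have hq0never : ∀ j', A.itr X (a + 1) q0 j' ∉ A.FA := by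
    intro j'
    obtain ⟨b, hb, hb2⟩ := hq0inf.exists_gt j'
    have := hg2 b j' (le_of_lt hb2)
    rwa [hb] at this
  obtain ⟨j, hj⟩ := A.alive_good X hAD (a + 1) q0 (A.Pen_subset_ALn X (a + 1) hq0mem)
  exact hq0never j hj

lemma allDie_of_flg_frequently (hfr : ∃ᶠ n in atTop, A.Flg X n) : A.AllDie X := by
  by_contra hcon
  unfold AllDie at hcon
  push_neg at hcon
  obtain ⟨n, q, hq, hnever⟩ := hcon
  have hAL : ∀ j, A.itr X n q j ∈ A.ALn X (n + j) := A.itr_mem_ALn X hq hnever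
  obtain ⟨t, ht, hflg⟩ := Filter.frequently_atTop.mp hfr (n + 1)
  obtain ⟨j, rfl⟩ : ∃ j, t = n + 1 + j := ⟨t - (n + 1), by omega⟩
  have hflg' : (A.dA (X (n + j)) '' A.Pen X (n + j)) \ A.FA = ∅ := by
    rw [show n + 1 + j = (n + j) + 1 by omega] at hflg
    exact (A.Flg_succ X (n + j)).mp hflg
  have hPenAL : A.Pen X (n + 1 + j) = A.ALn X (n + 1 + j) := by
    rw [show n + 1 + j = (n + j) + 1 by omega]
    exact A.Pen_succ_of_empty X hflg'
  have claim2 : ∀ j', A.itr X n q (j + 1 + j') ∈ A.Pen X (n + 1 + j + j') := by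
    intro j'
    induction j' with
    | zero =>
      rw [Nat.add_zero, hPenAL]
      have := hAL (j + 1)
      rwa [show n + (j + 1) = n + 1 + j by omega] at this
    | succ j' ih =>
      by_cases hemp : (A.dA (X (n + 1 + j + j')) '' A.Pen X (n + 1 + j + j')) \ A.FA = ∅
      · rw [show n + 1 + j + (j' + 1) = (n + 1 + j + j') + 1 from rfl,
          A.Pen_succ_of_empty X hemp]
        have := hAL (j + 1 + (j' + 1))
        rwa [show n + (j + 1 + (j' + 1)) = n + 1 + j + j' + 1 by omega] at this
      · rw [show n + 1 + j + (j' + 1) = (n + 1 + j + j') + 1 from rfl,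
          A.Pen_succ_of_ne X hemp]
        refine ⟨⟨A.itr X n q (j + 1 + j'), ih, ?_⟩, hnever _⟩
        rw [show j + 1 + (j' + 1) = (j + 1 + j') + 1 from rfl, itr_succ,
          show n + (j + 1 + j') = n + 1 + j + j' by omega]
  have hnoflg : ∀ j', ¬ A.Flg X (n + 1 + j + j' + 1) := by
    intro j' hflg2
    rw [A.Flg_succ X (n + 1 + j + j')] at hflg2
    have hmem : A.dA (X (n + 1 + j + j')) (A.itr X n q (j + 1 + j')) ∈
        (A.dA (X (n + 1 + j + j')) '' A.Pen X (n + 1 + j + j')) \ A.FA := by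
      refine ⟨⟨A.itr X n q (j + 1 + j'), claim2 j', rfl⟩, ?_⟩
      have := hnever (j + 1 + j' + 1)
      rwa [itr_succ, show n + (j + 1 + j') = n + 1 + j + j' by omega] at this
    rw [hflg2] at hmem
    exact hmem
  obtain ⟨t', ht', hflg3⟩ := Filter.frequently_atTop.mp hfr (n + 1 + j + 2)
  obtain ⟨j', rfl⟩ : ∃ j'', t' = n + 1 + j + j'' + 1 := ⟨t' - (n + j + 2), by omega⟩
  exact hnoflg j' hflg3

lemma buchi_iff_allDie [Finite Q] :
    BuchiAccepts A.stepM A.init {s : St P Q | s.2.2.2} X ↔ A.AllDie X := by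
  have heq : BuchiAccepts A.stepM A.init {s : St P Q | s.2.2.2} X ↔
      (∃ᶠ n in atTop, A.Flg X n) := Iff.rfl
  rw [heq]
  exact ⟨A.allDie_of_flg_frequently X, A.flg_frequently_of_allDie X⟩

lemma allDie_iff :
    A.AllDie X ↔ ∀ i : List Bool, act A.fI A.a0 i ∈ A.FI →
      ∃ m, act A.fA A.q0 (conv (pre X m) i) ∈ A.FA := by
  constructor
  · intro hAD i hfi
    by_cases hsm : ∃ m < i.length, act A.fA A.q0 (conv (pre X m) i) ∈ A.FA
    · obtain ⟨m, _, hm⟩ := hsm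
      exact ⟨m, hm⟩
    · push_neg at hsm
      have hR : A.Rset X i.length i ∩ A.FA = ∅ := by
        rw [Set.eq_empty_iff_forall_notMem]
        rintro r ⟨⟨m, hm, rfl⟩, hFA⟩
        exact hsm m hm hFA
      have hq : act A.fA A.q0 (conv (pre X i.length) i) ∈ A.Tset (A.Wn X i.length) := by
        refine ⟨act A.fI A.a0 i, A.Rset X i.length i, ?_, hfi, hR⟩
        rw [A.Wn_eq X i.length]
        exact ⟨i, rfl, rfl⟩
      obtain ⟨j, hj⟩ := hAD i.length _ hq
      rw [A.itr_act X le_rfl j] at hj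
      exact ⟨i.length + j, hj⟩
  · intro hcov n q hq
    rw [A.Wn_eq X n] at hq
    obtain ⟨p, R, hmem, hp, hR⟩ := hq
    obtain ⟨i, hlen, heq⟩ := hmem
    rw [Prod.ext_iff, Prod.ext_iff] at heq
    obtain ⟨h1, h2, h3⟩ := heq
    simp only at h1 h2 h3
    subst h1; subst h2; subst h3
    obtain ⟨m, hm⟩ := hcov i hp
    have hnm : n ≤ m := by
      by_contra hlt
      push_neg at hlt
      have : act A.fA A.q0 (conv (pre X m) i) ∈ A.Rset X n i ∩ A.FA :=
        ⟨⟨m, hlt, rfl⟩, hm⟩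
      rw [hR] at this
      exact this
    obtain ⟨j, rfl⟩ : ∃ j, m = n + j := ⟨m - n, by omega⟩
    refine ⟨j, ?_⟩
    rw [A.itr_act X (le_of_eq hlen) j]
    exact hm

end Auto

end Stmt10

/-- The covering region of every ART is the language of some
deterministic Büchi automaton of measure zero. -/
theorem stmt10 (I : Set (List Bool)) (U : List Bool → Set (List Bool)) (h : IsART I U) :
    ∃ (S : Type) (_ : Fintype S) (f : S → Bool → S) (s₀ : S) (F : Set S),
      mu {Y : ℕ → Bool | BuchiAccepts f s₀ F Y} = 0 ∧
      {Y : ℕ → Bool | BuchiAccepts f s₀ F Y} = coverRegion I U := by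
  obtain ⟨⟨hIreg, hLreg⟩, hsmall⟩ := h
  obtain ⟨P, instP, fI, a0, FI, hI⟩ := hIreg
  obtain ⟨Q, instQ, fA, q0, FA, hL⟩ := hLreg
  let A : Stmt10.Auto P Q := ⟨fI, a0, FI, fA, q0, FA⟩
  have hM1 : ∀ i x : List Bool, i ∈ I → (x ∈ U i ↔ act fA q0 (conv x i) ∈ FA) := by
    intro i x hi
    constructor
    · intro hx
      have hmem : conv x i ∈ {c | ∃ i ∈ I, ∃ x ∈ U i, c = conv x i} := ⟨i, hi, x, hx, rfl⟩
      rw [hL] at hmem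
      exact hmem
    · intro hx
      have hmem : conv x i ∈ {c | ∃ i ∈ I, ∃ x ∈ U i, c = conv x i} := by rw [hL]; exact hx
      obtain ⟨i', hi', x', hx', heq⟩ := hmem
      obtain ⟨hx2, hi2⟩ := Stmt10.conv_injective heq
      rw [hx2, hi2]; exact hx'
  have hset : {Y : ℕ → Bool | BuchiAccepts A.stepM A.init {s : Stmt10.St P Q | s.2.2.2} Y}
      = coverRegion I U := by
    ext X
    rw [Set.mem_setOf_eq, A.buchi_iff_allDie X, A.allDie_iff X]
    show _ ↔ X ∈ ⋂ i ∈ I, cyl (U i)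
    rw [Set.mem_iInter₂]
    constructor
    · intro hall i hi
      rw [Stmt10.mem_cyl_iff]
      have hfi : act fI a0 i ∈ FI := by rw [hI] at hi; exact hi
      obtain ⟨m, hm⟩ := hall i hfi
      exact ⟨m, (hM1 i _ hi).mpr hm⟩
    · intro hall i hfi
      have hi : i ∈ I := by rw [hI]; exact hfi
      obtain ⟨m, hm⟩ := Stmt10.mem_cyl_iff.mp (hall i hi)
      exact ⟨m, (hM1 i _ hi).mp hm⟩
  have hmeas : mu (coverRegion I U) = 0 := by
    have hle : ∀ ε : ENNReal, 0 < ε → mu (coverRegion I U) ≤ ε := by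
      intro ε hε
      obtain ⟨i, hi, hmu⟩ := hsmall ε hε
      exact le_trans (measure_mono (Set.biInter_subset_of_mem hi)) hmu
    exact nonpos_iff_eq_zero.mp (le_of_forall_gt_imp_ge_of_dense hle)
  exact ⟨Stmt10.St P Q, Fintype.ofFinite _, A.stepM, A.init, {s | s.2.2.2},
    by rw [hset]; exact hmeas, hset⟩
end

section
/- For every deterministic Büchi automaton M over Bool with μ(L(M)) = 0, there exists an automatic randomness test (I, U) whose covering region F(I, U) equals L(M). -/
open MeasureTheory Filter

-- ===== Auxiliary material =====

@[simp] theorem act_nil' {S A : Type*} (f : S → A → S) (s : S) : act f s [] = s := rfl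
@[simp] theorem act_cons' {S A : Type*} (f : S → A → S) (s : S) (a : A) (w : List A) :
    act f s (a :: w) = act f (f s a) w := rfl

theorem conv_nil_nil : conv [] [] = [] := by simp [conv]
theorem conv_cons_cons (u v : Bool) (x i : List Bool) :
    conv (u::x) (v::i) = (some u, some v) :: conv x i := by
  simp [conv, Nat.succ_max_succ, List.range_succ_eq_map, List.map_map, Function.comp]
theorem conv_cons_nil (u : Bool) (x : List Bool) :
    conv (u::x) [] = (some u, none) :: conv x [] := by
  simp [conv, List.range_succ_eq_map, List.map_map, Function.comp]
theorem conv_nil_cons (v : Bool) (i : List Bool) :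
    conv [] (v::i) = (none, some v) :: conv [] i := by
  simp [conv, List.range_succ_eq_map, List.map_map, Function.comp]

section Auto
variable {S : Type} (f : S → Bool → S) (F : Set S)

open Classical in
noncomputable def artTrans : Option (S × Fin 3) → (Option Bool × Option Bool) → Option (S × Fin 3) :=
  fun q a =>
  match q, a with
  | none, _ => none
  | some (s, j), (some u, some _) => if j = 0 then some (f s u, 0) else none
  | some (s, j), (some u, none) =>
      if j = 0 then some (f s u, if s ∈ F ∨ f s u ∈ F then 2 else 1)
      else if j = 1 then some (f s u, if f s u ∈ F then 2 else 1)
      else some (f s u, 2)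
  | some _, (none, _) => none

def Fset : Set (Option (S × Fin 3)) :=
  {q | ∃ s : S, (q = some (s, 0) ∧ s ∈ F) ∨ q = some (s, 2)}

@[simp] theorem mem_Fset_none : (none : Option (S × Fin 3)) ∉ Fset F := by simp [Fset]
@[simp] theorem mem_Fset_zero (s : S) : some (s, (0 : Fin 3)) ∈ Fset F ↔ s ∈ F := by simp [Fset]
@[simp] theorem mem_Fset_one (s : S) : some (s, (1 : Fin 3)) ∉ Fset F := by simp [Fset]
@[simp] theorem mem_Fset_two (s : S) : some (s, (2 : Fin 3)) ∈ Fset F := by simp [Fset]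

@[simp] theorem act_artTrans_none (w : List (Option Bool × Option Bool)) :
    act (artTrans f F) none w = none := by
  induction w with
  | nil => rfl
  | cons a w ih => simp [artTrans, ih]

open Classical in
theorem lemB (x : List Bool) : ∀ (s : S) (acc : Bool),
    (act (artTrans f F) (some (s, if acc then 2 else 1)) (conv x []) ∈ Fset F) ↔
      (acc = true ∨ ∃ m, 1 ≤ m ∧ m ≤ x.length ∧ act f s (x.take m) ∈ F) := by
  induction x with
  | nil =>
    intro s acc
    cases acc <;> simp [conv_nil_nil] <;> intros <;> omega
  | cons u x ih =>
    intro s acc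
    rw [conv_cons_nil]
    have hstep : artTrans f F (some (s, if acc then 2 else 1)) (some u, none)
        = some (f s u, if (acc || decide (f s u ∈ F)) = true then 2 else 1) := by
      cases acc <;> simp [artTrans] <;> by_cases hf : f s u ∈ F <;> simp [hf]
    rw [act_cons', hstep, ih]
    constructor
    · rintro (hacc | ⟨m, h1, h2, h3⟩)
      · rcases Bool.or_eq_true_iff.mp hacc with h | h
        · exact Or.inl h
        · exact Or.inr ⟨1, le_refl 1, by simp, by simpa using of_decide_eq_true h⟩
      · exact Or.inr ⟨m + 1, by omega, by simp; omega, by simpa using h3⟩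
    · rintro (hacc | ⟨m, h1, h2, h3⟩)
      · exact Or.inl (by simp [hacc])
      · rcases Nat.exists_eq_add_of_le h1 with ⟨k, rfl⟩
        cases k with
        | zero =>
          refine Or.inl ?_
          simp only [List.take, List.take_zero] at h3
          simp at h3
          simp [h3]
        | succ k =>
          refine Or.inr ⟨k + 1, by omega, by simp at h2 ⊢; omega, ?_⟩
          have hk : 1 + (k + 1) = k + 2 := by omega
          rw [hk] at h3
          simpa using h3

open Classical in
theorem lemC (i : List Bool) : ∀ (x : List Bool) (s : S),
    (act (artTrans f F) (some (s, 0)) (conv x i) ∈ Fset F) ↔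
      ∃ m, i.length ≤ m ∧ m ≤ x.length ∧ act f s (x.take m) ∈ F := by
  induction i with
  | nil =>
    intro x s
    cases x with
    | nil =>
      simp [conv_nil_nil]
    | cons u x =>
      rw [conv_cons_nil, act_cons']
      have hstep : artTrans f F (some (s, 0)) (some u, none)
          = some (f s u, if (decide (s ∈ F) || decide (f s u ∈ F)) = true then 2 else 1) := by
        simp [artTrans]
      rw [hstep, lemB]
      constructor
      · rintro (hacc | ⟨m, h1, h2, h3⟩)
        · rcases Bool.or_eq_true_iff.mp hacc with hh | hh
          · exact ⟨0, by simp, by simp, by simpa using of_decide_eq_true hh⟩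
          · exact ⟨1, by simp, by simp, by simpa using of_decide_eq_true hh⟩
        · exact ⟨m + 1, by simp, by simp; omega, by simpa using h3⟩
      · rintro ⟨m, _, h2, h3⟩
        cases m with
        | zero =>
          exact Or.inl (by simp at h3; simp [h3])
        | succ k =>
          cases k with
          | zero => exact Or.inl (by simp at h3; simp [h3])
          | succ k =>
            exact Or.inr ⟨k + 1, by omega, by simp at h2 ⊢; omega, by simpa using h3⟩
  | cons v i ih =>
    intro x s
    cases x with
    | nil =>
      rw [conv_nil_cons, act_cons']
      have : artTrans f F (some (s, 0)) (none, some v) = none := by simp [artTrans]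
      rw [this]
      simp
    | cons u x =>
      rw [conv_cons_cons, act_cons']
      have : artTrans f F (some (s, 0)) (some u, some v) = some (f s u, 0) := by
        simp [artTrans]
      rw [this, ih]
      constructor
      · rintro ⟨m, h1, h2, h3⟩
        exact ⟨m + 1, by simp; omega, by simp; omega, by simpa using h3⟩
      · rintro ⟨m, h1, h2, h3⟩
        cases m with
        | zero => simp at h1
        | succ k =>
          exact ⟨k, by simp at h1; omega, by simp at h2; omega, by simpa using h3⟩

open Classical in
theorem shapeB (w : List (Option Bool × Option Bool)) : ∀ (s : S) (acc : Bool),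
    act (artTrans f F) (some (s, if acc then 2 else 1)) w ∈ Fset F →
      ∃ x : List Bool, w = conv x [] := by
  induction w with
  | nil => intro s acc _; exact ⟨[], by simp [conv_nil_nil]⟩
  | cons a w ih =>
    intro s acc hw
    rcases a with ⟨o1, o2⟩
    cases o1 with
    | none =>
      rw [act_cons'] at hw
      have : artTrans f F (some (s, if acc then 2 else 1)) (none, o2) = none := by
        cases acc <;> simp [artTrans]
      rw [this] at hw; simp at hw
    | some u =>
      cases o2 with
      | some v =>
        rw [act_cons'] at hw
        have : artTrans f F (some (s, if acc then 2 else 1)) (some u, some v) = none := by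
          cases acc <;> simp [artTrans]
        rw [this] at hw; simp at hw
      | none =>
        rw [act_cons'] at hw
        have hstep : artTrans f F (some (s, if acc then 2 else 1)) (some u, none)
            = some (f s u, if (acc || decide (f s u ∈ F)) = true then 2 else 1) := by
          cases acc <;> simp [artTrans] <;> by_cases hf : f s u ∈ F <;> simp [hf]
        rw [hstep] at hw
        obtain ⟨x, hx⟩ := ih (f s u) _ hw
        exact ⟨u :: x, by rw [conv_cons_nil, hx]⟩

open Classical in
theorem shapeC (w : List (Option Bool × Option Bool)) : ∀ (s : S),
    act (artTrans f F) (some (s, 0)) w ∈ Fset F → ∃ x i : List Bool, w = conv x i := by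
  induction w with
  | nil => intro s _; exact ⟨[], [], by simp [conv_nil_nil]⟩
  | cons a w ih =>
    intro s hw
    rcases a with ⟨o1, o2⟩
    cases o1 with
    | none =>
      rw [act_cons'] at hw
      have : artTrans f F (some (s, (0 : Fin 3))) (none, o2) = none := by simp [artTrans]
      rw [this] at hw; simp at hw
    | some u =>
      cases o2 with
      | some v =>
        rw [act_cons'] at hw
        have : artTrans f F (some (s, (0:Fin 3))) (some u, some v) = some (f s u, 0) := by
          simp [artTrans]
        rw [this] at hw
        obtain ⟨x, i, hx⟩ := ih (f s u) hw
        exact ⟨u :: x, v :: i, by rw [conv_cons_cons, hx]⟩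
      | none =>
        rw [act_cons'] at hw
        have hstep : artTrans f F (some (s, (0:Fin 3))) (some u, none)
            = some (f s u, if (decide (s ∈ F) || decide (f s u ∈ F)) = true then 2 else 1) := by
          simp [artTrans]
        rw [hstep] at hw
        obtain ⟨x, hx⟩ := shapeB f F w (f s u) _ hw
        exact ⟨u :: x, [], by rw [conv_cons_nil, hx]⟩
end Auto

theorem mu_univ_ne_top : mu Set.univ ≠ ⊤ := by
  by_cases hm : AEMeasurable (fun x : ℝ => fun n => decide (⌊x * 2 ^ (n + 1)⌋ % 2 = 1))
      (volume.restrict (Set.Ico (0:ℝ) 1))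
  · rw [mu, Measure.map_apply_of_aemeasurable hm MeasurableSet.univ]
    simp [Real.volume_Ico]
  · rw [mu, Measure.map_of_not_aemeasurable hm]; simp

section Meas
variable {S : Type} (f : S → Bool → S) (s₀ : S) (F : Set S)

def Uset (i : List Bool) : Set (List Bool) :=
  {x | ∃ m, i.length ≤ m ∧ m ≤ x.length ∧ act f s₀ (x.take m) ∈ F}

theorem run_eq_act (X : ℕ → Bool) (m : ℕ) :
    run f s₀ X m = act f s₀ ((List.range m).map X) := by
  induction m with
  | zero => rfl
  | succ m ih =>
    rw [List.range_succ, List.map_append]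
    show f (run f s₀ X m) (X m) = _
    rw [ih]
    show _ = List.foldl f s₀ (List.map X (List.range m) ++ [X m])
    rw [List.foldl_append]
    rfl

theorem cyl_Uset (i : List Bool) :
    cyl (Uset f s₀ F i) = {X | ∃ m, i.length ≤ m ∧ run f s₀ X m ∈ F} := by
  ext X
  constructor
  · rintro ⟨x, ⟨m, h1, h2, h3⟩, hpre⟩
    refine ⟨m, h1, ?_⟩
    rw [run_eq_act]
    have hx : (List.range m).map X = x.take m := by
      apply List.ext_getElem
      · simp; omega
      · intro k hk1 hk2
        simp only [List.getElem_map, List.getElem_range, List.getElem_take]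
        have hkx : k < x.length := by simp at hk2; omega
        rw [hpre k hkx, List.getD_eq_getElem x false hkx]
    rw [hx]; exact h3
  · rintro ⟨m, h1, h2⟩
    refine ⟨(List.range m).map X, ⟨m, by simpa using h1, by simp, ?_⟩, ?_⟩
    · rw [List.take_of_length_le (by simp)]
      rw [← run_eq_act]; exact h2
    · intro k hk
      simp only [List.length_map, List.length_range] at hk
      rw [List.getD_eq_getElem _ false (by simpa using hk)]
      simp

theorem meas_run [Fintype S] (m : ℕ) (s : S) :
    MeasurableSet {X : ℕ → Bool | run f s₀ X m = s} := by
  induction m generalizing s with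
  | zero =>
    by_cases hs : s₀ = s
    · convert MeasurableSet.univ
      ext X; simp [run, hs]
    · convert MeasurableSet.empty
      ext X; simp [run, hs]
  | succ m ih =>
    have : {X : ℕ → Bool | run f s₀ X (m+1) = s} =
        ⋃ t : S, ⋃ b : Bool,
          ({X : ℕ → Bool | run f s₀ X m = t} ∩ {X | X m = b} ∩ {X | f t b = s}) := by
      ext X
      simp only [Set.mem_iUnion, Set.mem_inter_iff, Set.mem_setOf_eq]
      constructor
      · intro hX; exact ⟨run f s₀ X m, X m, ⟨⟨rfl, rfl⟩, hX⟩⟩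
      · rintro ⟨t, b, ⟨⟨g1, g2⟩, g3⟩⟩
        show f (run f s₀ X m) (X m) = s
        rw [g1, g2]; exact g3
    rw [this]
    refine MeasurableSet.iUnion fun t => MeasurableSet.iUnion fun b => ?_
    refine ((ih t).inter ?_).inter (MeasurableSet.const _)
    have hm : Measurable fun X : ℕ → Bool => X m := measurable_pi_apply m
    exact hm (measurableSet_singleton b)

theorem meas_V [Fintype S] (n : ℕ) :
    MeasurableSet {X : ℕ → Bool | ∃ m, n ≤ m ∧ run f s₀ X m ∈ F} := by
  have : {X : ℕ → Bool | ∃ m, n ≤ m ∧ run f s₀ X m ∈ F} =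
      ⋃ m, ⋃ (_ : n ≤ m), ⋃ s ∈ F, {X : ℕ → Bool | run f s₀ X m = s} := by
    ext X; simp only [Set.mem_iUnion, Set.mem_setOf_eq]
    constructor
    · rintro ⟨m, g1, g2⟩; exact ⟨m, g1, run f s₀ X m, g2, rfl⟩
    · rintro ⟨m, g1, s, hs, g2⟩; exact ⟨m, g1, g2 ▸ hs⟩
  rw [this]
  refine MeasurableSet.iUnion fun m => MeasurableSet.iUnion fun _ => ?_
  exact MeasurableSet.biUnion (Set.toFinite F).countable fun s _ => meas_run f s₀ m s

theorem tendsto_muV [Fintype S] :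
    Tendsto (fun n => mu {X : ℕ → Bool | ∃ m, n ≤ m ∧ run f s₀ X m ∈ F}) atTop
      (nhds (mu (⋂ n, {X : ℕ → Bool | ∃ m, n ≤ m ∧ run f s₀ X m ∈ F}))) := by
  apply tendsto_measure_iInter_atTop (fun n => (meas_V f s₀ F n).nullMeasurableSet)
  · intro a b hab X hX
    rcases hX with ⟨m, g1, g2⟩
    exact ⟨m, le_trans hab g1, g2⟩
  · exact ⟨0, fun hh => mu_univ_ne_top (top_unique (hh ▸ measure_mono (Set.subset_univ _)))⟩
end Meas

/-- For every deterministic Büchi automaton of measure zero, there is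
an ART whose covering region equals its language. -/
theorem stmt11 {S : Type} [Fintype S] (f : S → Bool → S) (s₀ : S) (F : Set S)
    (h : mu {Y : ℕ → Bool | BuchiAccepts f s₀ F Y} = 0) :
    ∃ (I : Set (List Bool)) (U : List Bool → Set (List Bool)),
      IsART I U ∧ coverRegion I U = {Y : ℕ → Bool | BuchiAccepts f s₀ F Y} := by
  refine ⟨Set.univ, Uset f s₀ F, ⟨⟨?_, ?_⟩, ?_⟩, ?_⟩
  · -- Regular univ
    refine ⟨Unit, inferInstance, fun _ _ => (), (), Set.univ, ?_⟩
    ext w; simp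
  · -- Regular convolution language
    refine ⟨Option (S × Fin 3), inferInstance, artTrans f F, some (s₀, 0), Fset F, ?_⟩
    ext w
    constructor
    · rintro ⟨i, -, x, hx, rfl⟩
      exact (lemC f F i x s₀).mpr hx
    · intro hw
      obtain ⟨x, i, rfl⟩ := shapeC f F w s₀ hw
      exact ⟨i, Set.mem_univ i, x, (lemC f F i x s₀).mp hw, rfl⟩
  · -- measure condition
    intro ε hε
    have hiV : (⋂ n, {X : ℕ → Bool | ∃ m, n ≤ m ∧ run f s₀ X m ∈ F})
        = {Y : ℕ → Bool | BuchiAccepts f s₀ F Y} := by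
      ext X
      simp only [Set.mem_iInter, Set.mem_setOf_eq, BuchiAccepts, frequently_atTop]
    have ht := tendsto_muV f s₀ F
    rw [hiV, h] at ht
    obtain ⟨n, hn⟩ := (ht.eventually_lt_const hε).exists
    refine ⟨List.replicate n false, Set.mem_univ _, ?_⟩
    rw [cyl_Uset]
    simp only [List.length_replicate]
    exact hn.le
  · -- cover region
    rw [coverRegion]
    ext X
    simp only [Set.mem_iInter, Set.mem_univ, Set.iInter_true, cyl_Uset,
      Set.mem_setOf_eq, BuchiAccepts, frequently_atTop]
    constructor
    · intro hX n
      obtain ⟨m, h1, h2⟩ := hX (List.replicate n false)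
      exact ⟨m, by simpa using h1, h2⟩
    · intro hX i
      obtain ⟨m, h1, h2⟩ := hX i.length
      exact ⟨m, h1, h2⟩
end

section
/- There is no universal automatic randomness test: there is no ART (J, V) such that for every ART (I, U) one has F(I, U) ⊆ F(J, V). -/
open MeasureTheory Filter

namespace Stmt13Aux

/-! ### Generic word/automaton lemmas -/

lemma act_append {S A : Type*} (f : S → A → S) (s : S) (u v : List A) :
    act f s (u ++ v) = act f (act f s u) v := List.foldl_append

def pref (X : ℕ → Bool) (n : ℕ) : List Bool := (List.range n).map X

@[simp] lemma pref_length (X : ℕ → Bool) (n : ℕ) : (pref X n).length = n := by simp [pref]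

lemma pref_succ (X : ℕ → Bool) (n : ℕ) : pref X (n+1) = pref X n ++ [X n] := by
  simp [pref, List.range_succ]

lemma pref_getD (X : ℕ → Bool) (n k : ℕ) (h : k < n) :
    (pref X n).getD k false = X k := by
  rw [List.getD_eq_getElem _ _ (by simpa using h)]
  simp [pref]

lemma pref_getElem? (X : ℕ → Bool) (n k : ℕ) (h : k < n) : (pref X n)[k]? = some (X k) := by
  rw [List.getElem?_eq_getElem (by simp [pref, h])]
  simp [pref]

lemma run_eq_act {S : Type*} (f : S → Bool → S) (s₀ : S) (X : ℕ → Bool) (n : ℕ) :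
    run f s₀ X n = act f s₀ (pref X n) := by
  induction n with
  | zero => simp [run, act, pref]
  | succ n ih => rw [run, ih, pref_succ, act_append]; rfl

@[simp] lemma conv_length (x i : List Bool) :
    (conv x i).length = max x.length i.length := by simp [conv]

lemma conv_getElem? (x i : List Bool) (k : ℕ) :
    (conv x i)[k]? = if k < max x.length i.length then some (x[k]?, i[k]?) else none := by
  split_ifs with h
  · rw [List.getElem?_eq_getElem (by rw [conv_length]; exact h)]
    simp [conv]
  · exact List.getElem?_eq_none (by rw [conv_length]; exact not_lt.mp h)

lemma conv_inj {x i x' i' : List Bool} (h : conv x i = conv x' i') : x = x' ∧ i = i' := by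
  have hlen : max x.length i.length = max x'.length i'.length := by
    have := congrArg List.length h; simpa using this
  have hval : ∀ k : ℕ, x[k]? = x'[k]? ∧ i[k]? = i'[k]? := by
    intro k
    by_cases hk : k < max x.length i.length
    · have h2 := congrArg (fun l => l[k]?) h
      rw [conv_getElem?, conv_getElem?, if_pos hk, if_pos (hlen ▸ hk)] at h2
      exact ⟨congrArg Prod.fst (Option.some_injective _ h2),
             congrArg Prod.snd (Option.some_injective _ h2)⟩
    · push_neg at hk
      constructor
      · rw [List.getElem?_eq_none (le_trans (le_max_left _ _) hk),
            List.getElem?_eq_none (le_trans (le_max_left _ _) (hlen ▸ hk))]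
      · rw [List.getElem?_eq_none (le_trans (le_max_right _ _) hk),
            List.getElem?_eq_none (le_trans (le_max_right _ _) (hlen ▸ hk))]
  exact ⟨List.ext_getElem? fun k => (hval k).1, List.ext_getElem? fun k => (hval k).2⟩

/-! ### Measure lemmas -/

lemma bitstep (y : ℝ) : ⌊2*y⌋ = 2*⌊y⌋ + ⌊2*y⌋ % 2 := by
  have h1 : 2*⌊y⌋ ≤ ⌊2*y⌋ := by
    rw [Int.le_floor]; push_cast; linarith [Int.floor_le y]
  have h2 : ⌊2*y⌋ < 2*⌊y⌋ + 2 := by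
    rw [Int.floor_lt]; push_cast; linarith [Int.lt_floor_add_one y]
  omega

lemma measurable_Phi : Measurable (fun (x:ℝ) (n:ℕ) => decide (⌊x * 2 ^ (n + 1)⌋ % 2 = 1)) := by
  apply measurable_pi_lambda
  intro n
  have h1 : Measurable fun x : ℝ => ⌊x * (2:ℝ)^(n+1)⌋ :=
    Int.measurable_floor.comp (measurable_id.mul_const _)
  exact (measurable_from_top (f := fun z : ℤ => decide (z % 2 = 1))).comp h1

lemma mu_univ : mu Set.univ = 1 := by
  rw [mu, Measure.map_apply measurable_Phi MeasurableSet.univ]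
  simp [Real.volume_Ico]

lemma measurableSet_prefixSet (w : List Bool) :
    MeasurableSet {X : ℕ → Bool | IsPrefixOfSeq w X} := by
  have h : {X : ℕ → Bool | IsPrefixOfSeq w X}
      = ⋂ k, ⋂ (_ : k < w.length), {X : ℕ → Bool | X k = w.getD k false} := by
    ext X; simp [IsPrefixOfSeq]
  rw [h]
  exact MeasurableSet.iInter fun k => MeasurableSet.iInter fun _ =>
    (measurable_pi_apply k) (measurableSet_singleton _)

lemma floor_pow_eq {x y : ℝ} (hx : x ∈ Set.Ico (0:ℝ) 1) (hy : y ∈ Set.Ico (0:ℝ) 1) (L : ℕ)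
    (h : ∀ k < L, ⌊x * 2^(k+1)⌋ % 2 = ⌊y * 2^(k+1)⌋ % 2) :
    ⌊x * 2^L⌋ = ⌊y * 2^L⌋ := by
  induction L with
  | zero =>
    simp only [pow_zero, mul_one]
    rw [Int.floor_eq_zero_iff.2 (by exact hx), Int.floor_eq_zero_iff.2 (by exact hy)]
  | succ k ih =>
    have ex : x * 2^(k+1) = 2*(x*2^k) := by ring
    have ey : y * 2^(k+1) = 2*(y*2^k) := by ring
    have hk := h k (by omega)
    rw [ex, ey] at hk ⊢
    rw [bitstep (x*2^k), bitstep (y*2^k), ih (fun k hk => h k (by omega)), hk]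

lemma mu_prefix_le (w : List Bool) :
    mu {X | IsPrefixOfSeq w X} ≤ 2⁻¹ ^ w.length := by
  set L := w.length with hL
  have hmeas := measurableSet_prefixSet w
  rw [mu, Measure.map_apply measurable_Phi hmeas, Measure.restrict_apply (measurable_Phi hmeas)]
  set A := (fun (x:ℝ) (n:ℕ) => decide (⌊x * 2 ^ (n + 1)⌋ % 2 = 1)) ⁻¹' {X | IsPrefixOfSeq w X}
    ∩ Set.Ico (0:ℝ) 1 with hA
  rcases Set.eq_empty_or_nonempty A with he | ⟨x₀, hx₀⟩
  · simp [he]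
  · have hdig : ∀ x ∈ A, ∀ k < L, ⌊x * 2^(k+1)⌋ % 2 = ⌊x₀ * 2^(k+1)⌋ % 2 := by
      intro x hx k hk
      have h1 : decide (⌊x * 2 ^ (k + 1)⌋ % 2 = 1) = w.getD k false := hx.1 k hk
      have h2 : decide (⌊x₀ * 2 ^ (k + 1)⌋ % 2 = 1) = w.getD k false := hx₀.1 k hk
      have h3 : (⌊x * 2 ^ (k + 1)⌋ % 2 = 1) ↔ (⌊x₀ * 2 ^ (k + 1)⌋ % 2 = 1) :=
        decide_eq_decide.mp (h1.trans h2.symm)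
      rcases Int.emod_two_eq (⌊x * 2 ^ (k + 1)⌋) with h4 | h4 <;>
        rcases Int.emod_two_eq (⌊x₀ * 2 ^ (k + 1)⌋) with h5 | h5 <;> omega
    set c := ⌊x₀ * 2^L⌋ with hc
    have hsub : A ⊆ Set.Ico ((c:ℝ)/2^L) ((c+1:ℝ)/2^L) := by
      intro x hx
      have hfl : ⌊x * 2^L⌋ = c := floor_pow_eq hx.2 hx₀.2 L (hdig x hx)
      have h1 : (c:ℝ) ≤ x * 2^L := hfl ▸ Int.floor_le _
      have h2 : x * 2^L < c + 1 := by
        have := Int.lt_floor_add_one (x * 2^L); rw [hfl] at this; exact_mod_cast this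
      have hp : (0:ℝ) < 2^L := by positivity
      constructor
      · rw [div_le_iff₀ hp]; linarith
      · rw [lt_div_iff₀ hp]; linarith
    calc volume A ≤ volume (Set.Ico ((c:ℝ)/2^L) ((c+1:ℝ)/2^L)) := measure_mono hsub
      _ = ENNReal.ofReal ((c+1:ℝ)/2^L - (c:ℝ)/2^L) := Real.volume_Ico
      _ = ENNReal.ofReal ((2:ℝ)⁻¹^L) := by
          congr 1
          field_simp
          rw [← mul_pow]; norm_num
      _ = 2⁻¹ ^ L := by
          rw [ENNReal.ofReal_pow (by norm_num)]
          congr 1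
          rw [ENNReal.ofReal_inv_of_pos (by norm_num)]
          norm_num

/-! ### The eventually-periodic modification -/

def phiF (n m k : ℕ) : ℕ := if k < m then k else n + (k - n) % (m - n)

lemma phiF_lt {n m : ℕ} (hnm : n < m) (k : ℕ) : phiF n m k < m := by
  unfold phiF
  split_ifs with h
  · exact h
  · have : (k - n) % (m - n) < m - n := Nat.mod_lt _ (by omega)
    omega

@[simp] lemma phiF_zero {n m : ℕ} (hnm : n < m) : phiF n m 0 = 0 := by
  unfold phiF
  rw [if_pos (show 0 < m by omega)]

lemma phiF_step {n m : ℕ} (hnm : n < m) (k : ℕ) :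
    phiF n m (k+1) = phiF n m k + 1 ∨ (phiF n m k + 1 = m ∧ phiF n m (k+1) = n) := by
  unfold phiF
  rcases lt_trichotomy (k+1) m with h | h | h
  · left; rw [if_pos h, if_pos (show k < m by omega)]
  · right
    rw [if_pos (show k < m by omega), if_neg (show ¬ (k+1 < m) by omega)]
    refine ⟨by omega, ?_⟩
    have h2 : k + 1 - n = m - n := by omega
    rw [h2, Nat.mod_self, Nat.add_zero]
  · have hk : ¬ (k < m) := by omega
    have hk1 : ¬ (k + 1 < m) := by omega
    rw [if_neg hk, if_neg hk1]
    have hd : 0 < m - n := by omega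
    have hrlt : (k - n) % (m - n) < m - n := Nat.mod_lt _ hd
    have key : (k + 1 - n) % (m - n) = ((k - n) % (m - n) + 1) % (m - n) := by
      have h2 : k + 1 - n = (k - n) + 1 := by omega
      rw [h2, Nat.add_mod (k-n) 1, Nat.add_mod ((k - n) % (m - n)) 1,
        Nat.mod_mod_of_dvd (k-n) dvd_rfl]
    by_cases hc : (k - n) % (m - n) + 1 < m - n
    · left
      rw [key, Nat.mod_eq_of_lt hc]
      omega
    · right
      have he : (k - n) % (m - n) + 1 = m - n := by omega
      refine ⟨by omega, ?_⟩
      rw [key, he, Nat.mod_self, Nat.add_zero]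

lemma run_phiF {S : Type*} (f : S → Bool → S) (s₀ : S) (X : ℕ → Bool) {n m : ℕ}
    (hnm : n < m) (hr : run f s₀ X n = run f s₀ X m) (k : ℕ) :
    run f s₀ (fun t => X (phiF n m t)) k = run f s₀ X (phiF n m k) := by
  induction k with
  | zero => rw [phiF_zero hnm]; rfl
  | succ k ih =>
    rw [run, ih]
    rcases phiF_step hnm k with h | ⟨h1, h2⟩
    · rw [h]; rfl
    · rw [h2, hr]
      conv_rhs => rw [← h1]
      rfl

/-! ### Product machine for one index -/

def cpre (j x : List Bool) : List (Option Bool × Option Bool) :=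
  (List.range x.length).map fun k => (x[k]?, j[k]?)

def extw (j : List Bool) (p : ℕ) : List (Option Bool × Option Bool) :=
  (List.range (j.length - p)).map fun t => ((none : Option Bool), j[p+t]?)

lemma cpre_snoc (j x : List Bool) (b : Bool) :
    cpre j (x ++ [b]) = cpre j x ++ [(some b, j[x.length]?)] := by
  unfold cpre
  rw [show (x ++ [b]).length = x.length + 1 by simp, List.range_succ, List.map_append]
  congr 1
  · apply List.map_congr_left
    intro k hk
    rw [List.getElem?_append_left (List.mem_range.mp hk)]
  · simp [List.getElem?_concat_length]

lemma conv_eq_cpre_extw (j x : List Bool) :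
    conv x j = cpre j x ++ extw j (min x.length j.length) := by
  rcases le_or_gt j.length x.length with h | h
  · have h1 : min x.length j.length = j.length := by omega
    have h2 : extw j j.length = [] := by simp [extw]
    rw [h1, h2, List.append_nil]
    unfold conv cpre
    rw [show max x.length j.length = x.length by omega]
  · have h1 : min x.length j.length = x.length := by omega
    rw [h1]
    unfold conv cpre extw
    have hsplit : List.range (max x.length j.length)
        = List.range x.length ++ (List.range (j.length - x.length)).map (fun t => x.length + t) := by
      rw [show max x.length j.length = x.length + (j.length - x.length) by omega, List.range_add]
    rw [hsplit, List.map_append, List.map_map]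
    congr 1
    apply List.map_congr_left
    intro t _
    simp only [Function.comp_apply]
    rw [List.getElem?_eq_none (by omega : x.length ≤ x.length + t)]

lemma act_prod {S : Type*} (f : S → (Option Bool × Option Bool) → S) (s₀ : S) (j : List Bool)
    (x : List Bool) :
    act (fun (t : S × Fin (j.length+1)) (b : Bool) =>
        (f t.1 (some b, j[(t.2 : ℕ)]?), ⟨min (t.2+1) j.length, by omega⟩))
      (s₀, ⟨0, by omega⟩) x
    = (act f s₀ (cpre j x), ⟨min x.length j.length, by omega⟩) := by
  induction x using List.reverseRecOn with
  | nil => simp [act, cpre]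
  | append_singleton x b ih =>
    rw [act_append, ih, cpre_snoc, act_append]
    refine Prod.ext ?_ (Fin.ext ?_)
    · show f (act f s₀ (cpre j x)) (some b, j[min x.length j.length]?) = _
      congr 2
      rcases le_or_gt j.length x.length with h | h
      · rw [show min x.length j.length = j.length by omega,
          List.getElem?_eq_none (le_refl _), List.getElem?_eq_none (by omega)]
      · rw [show min x.length j.length = x.length by omega]
    · show min (min x.length j.length + 1) j.length = min (x ++ [b]).length j.length
      simp; omega

/-! ### DFA for the constructed automatic family -/

def nextF (n m : ℕ) (hnm : n < m) (p : Fin m) : Fin m :=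
  if h : (p:ℕ)+1 < m then ⟨p+1, h⟩ else ⟨n, hnm⟩

def dfaF (X : ℕ → Bool) (n m : ℕ) (hnm : n < m) :
    Option (Fin m) → (Option Bool × Option Bool) → Option (Fin m) :=
  fun s a => s.bind fun p =>
    if a.1 = some (X (p:ℕ)) ∧ a.2.isSome = true then some (nextF n m hnm p) else none

lemma nextF_phiF {n m : ℕ} (hnm : n < m) (k : ℕ) :
    nextF n m hnm ⟨phiF n m k, phiF_lt hnm k⟩ = ⟨phiF n m (k+1), phiF_lt hnm (k+1)⟩ := by
  rcases phiF_step hnm k with h | ⟨h1, h2⟩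
  · have hlt : phiF n m k + 1 < m := h ▸ phiF_lt hnm (k+1)
    unfold nextF
    simp only [dif_pos hlt]
    exact Fin.ext h.symm
  · have hlt : ¬ (phiF n m k + 1 < m) := by omega
    unfold nextF
    simp only [dif_neg hlt]
    exact Fin.ext h2.symm

def goodC (X : ℕ → Bool) (n m : ℕ) (cw : List (Option Bool × Option Bool)) : Prop :=
  ∀ k, k < cw.length → ∃ b : Bool, cw[k]? = some (some (X (phiF n m k)), some b)

lemma act_dfaF (X : ℕ → Bool) {n m : ℕ} (hnm : n < m) (cw : List (Option Bool × Option Bool)) :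
    (goodC X n m cw ∧ act (dfaF X n m hnm) (some ⟨0, by omega⟩) cw
        = some ⟨phiF n m cw.length, phiF_lt hnm _⟩)
    ∨ (¬ goodC X n m cw ∧ act (dfaF X n m hnm) (some ⟨0, by omega⟩) cw = none) := by
  induction cw using List.reverseRecOn with
  | nil =>
    left
    constructor
    · intro k h; simp at h
    · show (some ⟨0, _⟩ : Option (Fin m)) = _
      rw [Option.some_inj]
      exact Fin.ext (by simp [phiF_zero hnm])
  | append_singleton cw a ih =>
    have hlen : (cw ++ [a]).length = cw.length + 1 := by simp
    rcases ih with ⟨hgood, hact⟩ | ⟨hbad, hact⟩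
    · rw [act_append, hact]
      by_cases hcond : a.1 = some (X (phiF n m cw.length)) ∧ a.2.isSome = true
      · left
        constructor
        · intro k h
          rw [hlen] at h
          rcases Nat.lt_or_ge k cw.length with hk | hk
          · rw [List.getElem?_append_left hk]
            exact hgood k hk
          · have hk' : k = cw.length := by omega
            subst hk'
            rw [List.getElem?_concat_length]
            obtain ⟨b, hb⟩ := Option.isSome_iff_exists.mp hcond.2
            exact ⟨b, by rw [← hcond.1, ← hb]⟩
        · show dfaF X n m hnm (some ⟨phiF n m cw.length, _⟩) a = _
          unfold dfaF
          simp only [Option.bind]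
          rw [if_pos hcond, nextF_phiF hnm, hlen]
      · right
        constructor
        · intro hg
          apply hcond
          obtain ⟨b, hb⟩ := hg cw.length (by omega)
          rw [List.getElem?_concat_length, Option.some_inj] at hb
          rw [hb]
          exact ⟨rfl, rfl⟩
        · show dfaF X n m hnm (some ⟨phiF n m cw.length, _⟩) a = _
          unfold dfaF
          simp only [Option.bind]
          rw [if_neg hcond]
    · right
      constructor
      · intro hg
        apply hbad
        intro k h
        have := hg k (by omega)
        rwa [List.getElem?_append_left h] at this
      · rw [act_append, hact]
        rfl

lemma regular_conv_family (X : ℕ → Bool) {n m : ℕ} (hnm : n < m) :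
    Regular {cw | ∃ i ∈ (Set.univ : Set (List Bool)),
      ∃ x ∈ ({pref (fun k => X (phiF n m k)) i.length} : Set (List Bool)), cw = conv x i} := by
  refine ⟨Option (Fin m), inferInstance, dfaF X n m hnm, some ⟨0, by omega⟩,
    {s | s.isSome = true}, ?_⟩
  ext cw
  simp only [Set.mem_setOf_eq, Set.mem_univ, Set.mem_singleton_iff, true_and]
  constructor
  · rintro ⟨i, x, rfl, rfl⟩
    set x := pref (fun k => X (phiF n m k)) i.length with hx
    have hgood : goodC X n m (conv x i) := by
      intro k h
      rw [show (conv x i).length = i.length by simp [conv, hx]] at h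
      refine ⟨i[k]'h, ?_⟩
      rw [conv_getElem?, if_pos (by simp [hx]; omega)]
      rw [hx, pref_getElem? _ _ _ h, List.getElem?_eq_getElem h]
    rcases act_dfaF X hnm (conv x i) with ⟨-, hact⟩ | ⟨hbad, -⟩
    · rw [hact]; rfl
    · exact absurd hgood hbad
  · intro h
    rcases act_dfaF X hnm cw with ⟨hgood, -⟩ | ⟨-, hact⟩
    · refine ⟨cw.map (fun a => a.2.getD false), pref (fun k => X (phiF n m k)) cw.length,
        by rw [List.length_map], ?_⟩
      apply List.ext_getElem?
      intro k
      rcases Nat.lt_or_ge k cw.length with hk | hk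
      · obtain ⟨b, hb⟩ := hgood k hk
        rw [hb, conv_getElem?, if_pos (by simp; omega)]
        rw [pref_getElem? _ _ _ hk, List.getElem?_map, hb]
        rfl
      · rw [List.getElem?_eq_none (by simpa using hk),
          conv_getElem?, if_neg (by simp; omega)]
    · rw [hact] at h
      simp at h

end Stmt13Aux

/-- There is no universal automatic randomness test. -/
theorem stmt13 :
    ¬ ∃ (J : Set (List Bool)) (V : List Bool → Set (List Bool)),
        IsART J V ∧ ∀ (I : Set (List Bool)) (U : List Bool → Set (List Bool)),
          IsART I U → coverRegion I U ⊆ coverRegion J V := by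
  classical
  rintro ⟨J, V, ⟨⟨hJreg, hCreg⟩, hsmall⟩, huniv⟩
  obtain ⟨j, hjJ, hj⟩ := hsmall 2⁻¹ (by norm_num)
  obtain ⟨S, instS, f, s₀, F, hC⟩ := hCreg
  -- slice lemma
  have hslice : ∀ x : List Bool, x ∈ V j ↔ act f s₀ (conv x j) ∈ F := by
    intro x
    constructor
    · intro hx
      have hmem : conv x j ∈ {cw | ∃ i ∈ J, ∃ y ∈ V i, cw = conv y i} := ⟨j, hjJ, x, hx, rfl⟩
      rw [hC] at hmem
      exact hmem
    · intro hx
      have hmem : conv x j ∈ {w | act f s₀ w ∈ F} := hx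
      rw [← hC] at hmem
      obtain ⟨i, hiJ, y, hy, he⟩ := hmem
      obtain ⟨h1, h2⟩ := Stmt13Aux.conv_inj he
      rw [h1, h2]
      exact hy
  -- product machine
  set g := fun (t : S × Fin (j.length+1)) (b : Bool) =>
      ((f t.1 (some b, j[(t.2 : ℕ)]?), ⟨min (t.2+1) j.length, by omega⟩) : S × Fin (j.length+1))
    with hg
  set t₀ := ((s₀, ⟨0, by omega⟩) : S × Fin (j.length+1)) with ht₀
  have hact : ∀ x : List Bool,
      act g t₀ x = (act f s₀ (Stmt13Aux.cpre j x), ⟨min x.length j.length, by omega⟩) :=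
    fun x => Stmt13Aux.act_prod f s₀ j x
  set Bad := fun (t : S × Fin (j.length+1)) =>
    act f t.1 (Stmt13Aux.extw j (t.2 : ℕ)) ∈ F with hBadDef
  have hchar2 : ∀ x : List Bool, x ∈ V j ↔ Bad (act g t₀ x) := by
    intro x
    rw [hslice, Stmt13Aux.conv_eq_cpre_extw, Stmt13Aux.act_append, hact x]
  -- a sequence outside cyl (V j)
  have hne : cyl (V j) ≠ Set.univ := by
    intro h
    rw [h, Stmt13Aux.mu_univ] at hj
    norm_num at hj
  obtain ⟨X, hX⟩ := (Set.ne_univ_iff_exists_notMem _).mp hne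
  have hBadRun : ∀ nn : ℕ, ¬ Bad (run g t₀ X nn) := by
    intro nn hb
    apply hX
    refine ⟨Stmt13Aux.pref X nn, ?_, ?_⟩
    · rw [hchar2]
      rwa [Stmt13Aux.run_eq_act] at hb
    · intro k hk
      rw [Stmt13Aux.pref_length] at hk
      exact (Stmt13Aux.pref_getD X nn k hk).symm
  -- pigeonhole
  letI : Fintype S := instS
  obtain ⟨a, b, hab, he⟩ := Finite.exists_ne_map_eq_of_infinite (fun nn : ℕ => run g t₀ X nn)
  obtain ⟨n, m, hnm, hr⟩ : ∃ n m, n < m ∧ run g t₀ X n = run g t₀ X m := by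
    rcases Nat.lt_or_ge a b with h | h
    · exact ⟨a, b, h, he⟩
    · exact ⟨b, a, by omega, he.symm⟩
  set X' : ℕ → Bool := fun k => X (Stmt13Aux.phiF n m k) with hX'def
  have hrun' : ∀ k, run g t₀ X' k = run g t₀ X (Stmt13Aux.phiF n m k) :=
    Stmt13Aux.run_phiF g t₀ X hnm hr
  have hBadRun' : ∀ k, ¬ Bad (run g t₀ X' k) := fun k hb =>
    hBadRun _ (by rwa [hrun'] at hb)
  have hX'notin : X' ∉ cyl (V j) := by
    rintro ⟨w, hwV, hpre⟩
    have hw : w = Stmt13Aux.pref X' w.length := by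
      apply List.ext_getElem (by simp)
      intro k h1 h2
      have h3 : X' k = w.getD k false := hpre k h1
      rw [List.getD_eq_getElem _ _ h1] at h3
      rw [← h3]
      simp [Stmt13Aux.pref]
    rw [hw] at hwV
    rw [hchar2, ← Stmt13Aux.run_eq_act] at hwV
    exact hBadRun' _ hwV
  -- the new ART
  set U : List Bool → Set (List Bool) := fun i => {Stmt13Aux.pref X' i.length} with hU
  have hART : IsART Set.univ U := by
    refine ⟨⟨⟨Unit, inferInstance, fun _ _ => (), (), Set.univ, by ext w; simp [act]⟩, ?_⟩, ?_⟩
    · exact Stmt13Aux.regular_conv_family X hnm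
    · intro ε hε
      obtain ⟨n0, hn0⟩ := ENNReal.exists_inv_two_pow_lt (ne_of_gt hε)
      refine ⟨List.replicate n0 false, trivial, ?_⟩
      have hcyl : cyl (U (List.replicate n0 false)) = {Y | IsPrefixOfSeq (Stmt13Aux.pref X' n0) Y} := by
        ext Y
        simp [cyl, hU, List.length_replicate]
      rw [hcyl]
      calc mu _ ≤ 2⁻¹ ^ (Stmt13Aux.pref X' n0).length := Stmt13Aux.mu_prefix_le _
        _ = 2⁻¹ ^ n0 := by rw [Stmt13Aux.pref_length]
        _ ≤ ε := le_of_lt hn0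
  have hcov : X' ∈ coverRegion Set.univ U := by
    apply Set.mem_iInter₂.mpr
    intro i _
    refine ⟨Stmt13Aux.pref X' i.length, rfl, ?_⟩
    intro k hk
    rw [Stmt13Aux.pref_length] at hk
    exact (Stmt13Aux.pref_getD X' i.length k hk).symm
  have hfin := Set.mem_iInter₂.mp (huniv _ _ hART hcov) j hjJ
  exact hX'notin hfin
end
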